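/- arXiv:2407.01121 — 5 statements merged into one kernel-verified Lean document; each statement's English description precedes it below -/
import Mathlib

section
/- Let G and H be connected graphs each with matching number 1 (i.e., each is a triangle or a star). Then G ⊠ H is well-edge-dominated if and only if both G and H are K_2. -/
open SimpleGraph

variable {V : Type*} {W : Type*}

/-- The strong product of two simple graphs. -/
def strongProd (G : SimpleGraph V) (H : SimpleGraph W) : SimpleGraph (V × W) where
  Adj x y := x ≠ y ∧ (x.1 = y.1 ∨ G.Adj x.1 y.1) ∧ (x.2 = y.2 ∨ H.Adj x.2 y.2)
  symm := ⟨fun x y ⟨hne, h1, h2⟩ =>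
    ⟨hne.symm, h1.imp Eq.symm (fun h => h.symm), h2.imp Eq.symm (fun h => h.symm)⟩⟩
  loopless := ⟨fun x h => h.1 rfl⟩

/-- A dominating set: every vertex outside has a neighbor inside. -/
def IsDomSet (G : SimpleGraph V) (D : Set V) : Prop :=
  ∀ v, v ∉ D → ∃ u ∈ D, G.Adj u v

/-- A minimal dominating set. -/
def IsMinlDomSet (G : SimpleGraph V) (D : Set V) : Prop :=
  IsDomSet G D ∧ ∀ D', D' ⊂ D → ¬ IsDomSet G D'

/-- A graph is well-dominated if every minimal dominating set has minimum cardinality. -/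
def WellDominated (G : SimpleGraph V) : Prop :=
  ∀ D D' : Set V, IsMinlDomSet G D → IsDomSet G D' → D.ncard ≤ D'.ncard

/-- The domination number. -/
noncomputable def domNum (G : SimpleGraph V) : ℕ :=
  sInf {n | ∃ D : Set V, IsDomSet G D ∧ D.ncard = n}

/-- The closed neighborhood of a vertex. -/
def closedNbhd (G : SimpleGraph V) (v : V) : Set V := insert v (G.neighborSet v)

/-- `G` is trivially well-dominated via the vertices `u 0, …, u (t-1)`:
their closed neighborhoods are cliques and partition `V`. -/
def TriviallyWellDominatedWith (G : SimpleGraph V) {t : ℕ} (u : Fin t → V) : Prop :=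
  (∀ i, G.IsClique (closedNbhd G (u i))) ∧ (∀ v : V, ∃! i, v ∈ closedNbhd G (u i))

def TriviallyWellDominated (G : SimpleGraph V) : Prop :=
  ∃ (t : ℕ) (u : Fin t → V), TriviallyWellDominatedWith G u

/-- An edge dominating set: every edge of `G` not in `F` shares an endpoint
with some edge of `F`. -/
def IsEDS (G : SimpleGraph V) (F : Set (Sym2 V)) : Prop :=
  F ⊆ G.edgeSet ∧ ∀ e ∈ G.edgeSet, e ∉ F → ∃ f ∈ F, ∃ v, v ∈ e ∧ v ∈ f

/-- A minimal edge dominating set. -/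
def IsMinlEDS (G : SimpleGraph V) (F : Set (Sym2 V)) : Prop :=
  IsEDS G F ∧ ∀ F', F' ⊂ F → ¬ IsEDS G F'

/-- Well-edge-dominated: every minimal edge dominating set has minimum cardinality. -/
def WellEdgeDominated (G : SimpleGraph V) : Prop :=
  ∀ F F' : Set (Sym2 V), IsMinlEDS G F → IsEDS G F' → F.ncard ≤ F'.ncard

/-- A matching, as a set of pairwise nonadjacent edges. -/
def IsMatchingSet (G : SimpleGraph V) (M : Set (Sym2 V)) : Prop :=
  M ⊆ G.edgeSet ∧ ∀ e ∈ M, ∀ f ∈ M, e ≠ f → ∀ v : V, ¬ (v ∈ e ∧ v ∈ f)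

/-- A maximal matching. -/
def IsMaxlMatching (G : SimpleGraph V) (M : Set (Sym2 V)) : Prop :=
  IsMatchingSet G M ∧ ∀ M', M ⊆ M' → IsMatchingSet G M' → M' = M

/-- A maximum matching. -/
def IsMaxMatching (G : SimpleGraph V) (M : Set (Sym2 V)) : Prop :=
  IsMatchingSet G M ∧ ∀ M', IsMatchingSet G M' → M'.ncard ≤ M.ncard

/-- Equimatchable: every maximal matching is maximum. -/
def Equimatchable (G : SimpleGraph V) : Prop :=
  ∀ M M' : Set (Sym2 V), IsMaxlMatching G M → IsMatchingSet G M' → M'.ncard ≤ M.ncard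

/-- The set of endpoints of the edges of `M`. -/
def mVerts (M : Set (Sym2 V)) : Set V := {v | ∃ e ∈ M, v ∈ e}

/-- A perfect matching covers every vertex. -/
def IsPerfectMatchingSet (G : SimpleGraph V) (M : Set (Sym2 V)) : Prop :=
  IsMatchingSet G M ∧ ∀ v : V, v ∈ mVerts M

/-- A near-perfect matching covers all vertices but exactly one. -/
def IsNearPerfectMatchingSet (G : SimpleGraph V) (M : Set (Sym2 V)) : Prop :=
  IsMatchingSet G M ∧ ∃ w : V, mVerts M = {w}ᶜ

/-- The matching number. -/
noncomputable def matchNum (G : SimpleGraph V) : ℕ :=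
  sSup {n | ∃ M : Set (Sym2 V), IsMatchingSet G M ∧ M.ncard = n}

/-- The independence number. -/
noncomputable def indepNum (G : SimpleGraph V) : ℕ :=
  sSup {n | ∃ S : Set V, (S.Pairwise fun u v => ¬ G.Adj u v) ∧ S.ncard = n}

/-- `G` with a set of vertices deleted (induced subgraph on the complement). -/
abbrev delVerts (G : SimpleGraph V) (S : Set V) : SimpleGraph ↥(Sᶜ) := G.induce Sᶜ

/-- Factor-critical: deleting any vertex leaves a graph with a perfect matching. -/
def FactorCritical (G : SimpleGraph V) : Prop :=
  ∀ v : V, ∃ M, IsPerfectMatchingSet (delVerts G {v}) M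

/-- 2-connected: at least three vertices, connected, and no cutvertex. -/
def TwoConnected (G : SimpleGraph V) [Fintype V] : Prop :=
  3 ≤ Fintype.card V ∧ G.Connected ∧ ∀ v : V, (delVerts G {v}).Connected


section Aux

variable {X : Type*} {Y : Type*}

/-- Star edge-dominating set from a vertex `z` over a set `T` of neighbors. -/
lemma starEDS (J : SimpleGraph X) (z : X) (T : Set X)
    (hadj : ∀ t ∈ T, J.Adj z t) (hne : T.Nonempty)
    (hcov : ∀ e ∈ J.edgeSet, z ∉ e → ∃ t ∈ T, t ∈ e) :
    IsEDS J ((fun t => s(z,t)) '' T) := by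
  constructor
  · rintro e ⟨t, ht, rfl⟩
    exact (J.mem_edgeSet).mpr (hadj t ht)
  · intro e he hef
    by_cases hz : z ∈ e
    · obtain ⟨t0, ht0⟩ := hne
      exact ⟨s(z,t0), ⟨t0, ht0, rfl⟩, z, hz, Sym2.mem_mk_left z t0⟩
    · obtain ⟨t, htT, hte⟩ := hcov e he hz
      exact ⟨s(z,t), ⟨t, htT, rfl⟩, t, hte, Sym2.mem_mk_right z t⟩

lemma starMinlEDS (J : SimpleGraph X) (z : X) (T : Set X)
    (hadj : ∀ t ∈ T, J.Adj z t) (hne : T.Nonempty)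
    (hcov : ∀ e ∈ J.edgeSet, z ∉ e → ∃ t ∈ T, t ∈ e)
    (hpriv : ∀ t ∈ T, ∃ e ∈ J.edgeSet, t ∈ e ∧ z ∉ e ∧ ∀ t' ∈ T, t' ∈ e → t' = t) :
    IsMinlEDS J ((fun t => s(z,t)) '' T) := by
  refine ⟨starEDS J z T hadj hne hcov, ?_⟩
  intro F'' hss hEDS
  obtain ⟨g, hgF, hgF''⟩ := Set.exists_of_ssubset hss
  obtain ⟨t, htT, rfl⟩ := hgF
  obtain ⟨et, hetE, htet, hzet, hpr⟩ := hpriv t htT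
  rcases hEDS with ⟨hsub'', hdom''⟩
  have hetF'' : et ∉ F'' := by
    intro hmem
    obtain ⟨t', _, rfl⟩ := hss.subset hmem
    exact hzet (Sym2.mem_mk_left z t')
  obtain ⟨f, hfF'', v, hve, hvf⟩ := hdom'' et hetE hetF''
  obtain ⟨t', ht'T, rfl⟩ := hss.subset hfF''
  rcases Sym2.mem_iff.mp hvf with rfl | rfl
  · exact hzet hve
  · exact hgF'' (by rwa [hpr v ht'T hve] at hfF'')

lemma star_ncard (J : SimpleGraph X) (z : X) (T : Set X)
    (hadj : ∀ t ∈ T, J.Adj z t) :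
    ((fun t => s(z,t)) '' T).ncard = T.ncard := by
  refine Set.ncard_image_of_injOn ?_
  intro t1 h1 t2 h2 heq
  simp only [Sym2.eq_iff] at heq
  rcases heq with ⟨-, h⟩ | ⟨h, -⟩
  · exact h
  · exact absurd h.symm (hadj t2 h2).ne'

end Aux
section Iso

variable {X : Type*} {Y : Type*} {J1 : SimpleGraph X} {J2 : SimpleGraph Y}

lemma map_map_symm (φ : J1 ≃g J2) (e : Sym2 X) :
    Sym2.map ⇑φ.symm (Sym2.map ⇑φ e) = e := by
  rw [Sym2.map_map]
  have : (⇑φ.symm ∘ ⇑φ) = id := by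
    funext x; simp
  rw [this]; simp

lemma map_symm_map (φ : J1 ≃g J2) (e : Sym2 Y) :
    Sym2.map ⇑φ (Sym2.map ⇑φ.symm e) = e := by
  rw [Sym2.map_map]
  have : (⇑φ ∘ ⇑φ.symm) = id := by
    funext x; simp
  rw [this]; simp

lemma mem_edgeSet_map (φ : J1 ≃g J2) (e : Sym2 X) :
    e ∈ J1.edgeSet ↔ Sym2.map ⇑φ e ∈ J2.edgeSet := by
  induction e using Sym2.ind with
  | _ x y =>
    simp only [Sym2.map_pair_eq, SimpleGraph.mem_edgeSet]
    exact ⟨fun h => φ.map_rel_iff.mpr h, fun h => φ.map_rel_iff.mp h⟩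

lemma isEDS_map (φ : J1 ≃g J2) (F : Set (Sym2 X)) (h : IsEDS J1 F) :
    IsEDS J2 (Sym2.map ⇑φ '' F) := by
  obtain ⟨hsub, hdom⟩ := h
  constructor
  · rintro e ⟨f, hf, rfl⟩
    exact (mem_edgeSet_map φ f).mp (hsub hf)
  · intro e he hef
    set e' := Sym2.map ⇑φ.symm e with he'
    have hee : Sym2.map ⇑φ e' = e := map_symm_map φ e
    have he'E : e' ∈ J1.edgeSet := by
      rw [mem_edgeSet_map φ e', hee]; exact he
    have he'F : e' ∉ F := fun hmem => hef ⟨e', hmem, hee⟩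
    obtain ⟨f, hfF, v, hve, hvf⟩ := hdom e' he'E he'F
    refine ⟨Sym2.map ⇑φ f, ⟨f, hfF, rfl⟩, φ v, ?_, Sym2.mem_map.mpr ⟨v, hvf, rfl⟩⟩
    have : φ v ∈ Sym2.map ⇑φ e' := Sym2.mem_map.mpr ⟨v, hve, rfl⟩
    rwa [hee] at this

lemma isMinlEDS_map (φ : J1 ≃g J2) (F : Set (Sym2 X)) (h : IsMinlEDS J1 F) :
    IsMinlEDS J2 (Sym2.map ⇑φ '' F) := by
  refine ⟨isEDS_map φ F h.1, ?_⟩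
  intro D hD hDE
  set C := Sym2.map ⇑φ.symm '' D with hC
  have hCD : Sym2.map ⇑φ '' C = D := by
    rw [hC, Set.image_image]
    have : ∀ e ∈ D, Sym2.map ⇑φ (Sym2.map ⇑φ.symm e) = e := fun e _ => map_symm_map φ e
    rw [Set.image_congr this, Set.image_id']
  have hCF : C ⊆ F := by
    rintro c ⟨d, hd, rfl⟩
    obtain ⟨f, hfF, rfl⟩ := hD.subset hd
    rwa [map_map_symm]
  have hCne : C ≠ F := fun hEq => hD.ne (by rw [← hCD, hEq])
  exact h.2 C (ssubset_iff_subset_ne.mpr ⟨hCF, hCne⟩) (isEDS_map φ.symm D hDE)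

lemma ncard_map {f : X → Y} (hf : Function.Injective f) (F : Set (Sym2 X)) :
    (Sym2.map f '' F).ncard = F.ncard :=
  Set.ncard_image_of_injective F (Sym2.map.injective hf)

lemma wed_of_iso (φ : J1 ≃g J2) (h : WellEdgeDominated J1) : WellEdgeDominated J2 := by
  intro F F' hF hF'
  have h1 := isMinlEDS_map φ.symm F hF
  have h2 := isEDS_map φ.symm F' hF'
  have := h _ _ h1 h2
  rwa [ncard_map φ.symm.injective, ncard_map φ.symm.injective] at this

end Iso
section Basics

variable {X : Type*}

def strongProd_comm_iso (G : SimpleGraph V) (H : SimpleGraph W) :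
    strongProd G H ≃g strongProd H G := by
  refine ⟨Equiv.prodComm V W, ?_⟩
  intro p q
  constructor
  · rintro ⟨h1, h2, h3⟩
    exact ⟨fun h => h1 (by simpa [Prod.ext_iff] using (Prod.ext_iff.mp h).symm), h3, h2⟩
  · rintro ⟨h1, h2, h3⟩
    refine ⟨fun h => h1 ?_, h3, h2⟩
    · simp [Prod.ext_iff] at h ⊢
      exact h.symm

lemma exists_adj_of_connected {G : SimpleGraph X} (hc : G.Connected) {v u : X}
    (hne : u ≠ v) : ∃ w, G.Adj v w := by
  obtain ⟨walk⟩ := hc.preconnected v u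
  cases walk with
  | nil => exact absurd rfl hne.symm
  | cons h _ => exact ⟨_, h⟩

/-- Structure of connected graphs with matching number 1. -/
lemma matchNum_one_structure [Fintype X] {G : SimpleGraph X} (hc : G.Connected)
    (hm : matchNum G = 1) :
    (∃ a x, x ≠ a ∧ (∀ v, v ≠ a → G.Adj a v) ∧ (∀ u v, G.Adj u v → u = a ∨ v = a)) ∨
    (∃ x y z : X, x ≠ y ∧ x ≠ z ∧ y ≠ z ∧ (∀ u v : X, u ≠ v → G.Adj u v) ∧
      (∀ v : X, v = x ∨ v = y ∨ v = z)) := by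
  classical
  have hm' : sSup {n | ∃ M : Set (Sym2 X), IsMatchingSet G M ∧ M.ncard = n} = 1 := hm
  -- basic facts about the matching number
  have hbdd : BddAbove {n | ∃ M : Set (Sym2 X), IsMatchingSet G M ∧ M.ncard = n} := by
    refine ⟨Fintype.card (Sym2 X), ?_⟩
    rintro n ⟨M, _, rfl⟩
    have := Set.ncard_le_ncard (Set.subset_univ M) (Set.toFinite _)
    simpa [Set.ncard_univ] using this
  have h0 : (0 : ℕ) ∈ {n | ∃ M : Set (Sym2 X), IsMatchingSet G M ∧ M.ncard = n} := by
    exact ⟨∅, ⟨by simp, by simp⟩, by simp⟩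
  have h1 : ∃ M : Set (Sym2 X), IsMatchingSet G M ∧ M.ncard = 1 := by
    have := Nat.sSup_mem ⟨0, h0⟩ hbdd
    rw [hm'] at this
    exact this
  obtain ⟨M, hM, hM1⟩ := h1
  obtain ⟨e0, he0⟩ := Set.ncard_eq_one.mp hM1
  have he0E : e0 ∈ G.edgeSet := hM.1 (he0 ▸ rfl)
  -- no two disjoint edges
  have hshare : ∀ e ∈ G.edgeSet, ∀ f ∈ G.edgeSet, e ≠ f → ∃ v, v ∈ e ∧ v ∈ f := by
    intro e he f hf hef
    by_contra hno
    push_neg at hno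
    have hmatch : IsMatchingSet G {e, f} := by
      constructor
      · rintro g (rfl | rfl) <;> assumption
      · rintro g (rfl | rfl) h (rfl | rfl) hne v ⟨hv1, hv2⟩
        · exact hne rfl
        · exact hno v hv1 hv2
        · exact hno v hv2 hv1
        · exact hne rfl
    have h2 : (2 : ℕ) ∈ {n | ∃ M : Set (Sym2 X), IsMatchingSet G M ∧ M.ncard = n} :=
      ⟨{e, f}, hmatch, Set.ncard_pair hef⟩
    have := le_csSup hbdd h2
    rw [hm'] at this
    omega
  -- representation of e0
  induction e0 using Sym2.ind with
  | _ x y =>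
  have hxy : G.Adj x y := (G.mem_edgeSet).mp he0E
  by_cases hx : ∀ f ∈ G.edgeSet, x ∈ f
  · -- star with center x
    left
    refine ⟨x, y, hxy.ne', ?_, ?_⟩
    · intro v hv
      obtain ⟨w, hw⟩ := exists_adj_of_connected hc (Ne.symm hv)
      have : x ∈ s(v, w) := hx _ ((G.mem_edgeSet).mpr hw)
      rcases Sym2.mem_iff.mp this with rfl | rfl
      · exact absurd rfl hv
      · exact hw.symm
    · intro u v huv
      have : x ∈ s(u, v) := hx _ ((G.mem_edgeSet).mpr huv)
      rcases Sym2.mem_iff.mp this with rfl | rfl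
      · exact Or.inl rfl
      · exact Or.inr rfl
  · push_neg at hx
    obtain ⟨f, hfE, hxf⟩ := hx
    have hyf : y ∈ f := by
      obtain ⟨v, hv1, hv2⟩ := hshare _ he0E _ hfE (fun h => hxf (h ▸ Sym2.mem_mk_left x y))
      rcases Sym2.mem_iff.mp hv1 with rfl | rfl
      · exact absurd hv2 hxf
      · exact hv2
    have key : ∀ z', G.Adj y z' → x ≠ z' → (∃ a x, x ≠ a ∧ (∀ v, v ≠ a → G.Adj a v) ∧ (∀ u v, G.Adj u v → u = a ∨ v = a)) ∨
        (∃ x y z : X, x ≠ y ∧ x ≠ z ∧ y ≠ z ∧ (∀ u v : X, u ≠ v → G.Adj u v) ∧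
          (∀ v : X, v = x ∨ v = y ∨ v = z)) := by
      intro z' hyz' hxz'
      by_cases hy : ∀ g ∈ G.edgeSet, y ∈ g
      · left
        refine ⟨y, x, hxy.ne, ?_, ?_⟩
        · intro v hv
          obtain ⟨w, hw⟩ := exists_adj_of_connected hc (Ne.symm hv)
          have : y ∈ s(v, w) := hy _ ((G.mem_edgeSet).mpr hw)
          rcases Sym2.mem_iff.mp this with rfl | rfl
          · exact absurd rfl hv
          · exact hw.symm
        · intro u v huv
          have : y ∈ s(u, v) := hy _ ((G.mem_edgeSet).mpr huv)
          rcases Sym2.mem_iff.mp this with rfl | rfl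
          · exact Or.inl rfl
          · exact Or.inr rfl
      · push_neg at hy
        obtain ⟨g, hgE, hyg⟩ := hy
        have hxg : x ∈ g := by
          obtain ⟨v, hv1, hv2⟩ := hshare _ he0E _ hgE (fun h => hyg (h ▸ Sym2.mem_mk_right x y))
          rcases Sym2.mem_iff.mp hv1 with rfl | rfl
          · exact hv2
          · exact absurd hv2 hyg
        have hz'g : z' ∈ g := by
          have hne : s(y, z') ≠ g := fun h => hyg (h ▸ Sym2.mem_mk_left y z')
          obtain ⟨v, hv1, hv2⟩ := hshare _ ((G.mem_edgeSet).mpr hyz') _ hgE hne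
          rcases Sym2.mem_iff.mp hv1 with rfl | rfl
          · exact absurd hv2 hyg
          · exact hv2
        have hgxz : g = s(x, z') := (Sym2.eq_of_ne_mem hxz' hxg hz'g (Sym2.mem_mk_left x z') (Sym2.mem_mk_right x z'))
        have hxz : G.Adj x z' := (G.mem_edgeSet).mp (hgxz ▸ hgE)
        have hxyne : x ≠ y := hxy.ne
        have hyz'ne : y ≠ z' := hyz'.ne
        have hxy' := hxy.symm
        have hyz'' := hyz'.symm
        have hxz' := hxz.symm
        -- every endpoint of every edge is in the triangle
        have hmem : ∀ p q : X, G.Adj p q → p = x ∨ p = y ∨ p = z' := by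
          intro p q hpq
          by_contra hno
          push_neg at hno
          obtain ⟨hpx, hpy, hpz⟩ := hno
          have getq : ∀ u w : X, G.Adj u w → p ≠ u → p ≠ w → q ∈ s(u,w) := by
            intro u w huw hpu hpw
            have hne : s(p,q) ≠ s(u,w) := by
              intro h
              rcases Sym2.eq_iff.mp h with ⟨h1, -⟩ | ⟨h1, -⟩
              · exact hpu h1
              · exact hpw h1
            obtain ⟨v, hv1, hv2⟩ := hshare _ ((G.mem_edgeSet).mpr hpq) _ ((G.mem_edgeSet).mpr huw) hne
            rcases Sym2.mem_iff.mp hv1 with rfl | rfl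
            · rcases Sym2.mem_iff.mp hv2 with rfl | rfl
              · exact absurd rfl hpu
              · exact absurd rfl hpw
            · exact hv2
          have hq1 := getq x y hxy hpx hpy
          have hq2 := getq y z' hyz' hpy hpz
          have hq3 := getq x z' hxz hpx hpz
          rcases Sym2.mem_iff.mp hq1 with rfl | rfl
          · rcases Sym2.mem_iff.mp hq2 with h | h
            · exact hxyne h
            · exact hxz.ne h
          · rcases Sym2.mem_iff.mp hq3 with h | h
            · exact hxyne h.symm
            · exact hyz'ne h
        have hall : ∀ v : X, v = x ∨ v = y ∨ v = z' := by
          intro v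
          by_cases hvx : v = x
          · exact Or.inl hvx
          · obtain ⟨w, hw⟩ := exists_adj_of_connected hc (Ne.symm hvx)
            exact hmem v w hw
        right
        refine ⟨x, y, z', hxyne, (fun h => hxz.ne h), hyz'ne, ?_, hall⟩
        intro u v huv
        rcases hall u with rfl | rfl | rfl <;> rcases hall v with rfl | rfl | rfl <;>
          first | exact absurd rfl huv | assumption
    revert hfE hxf hyf
    induction f using Sym2.ind with
    | _ y1 z2 =>
    intro hfE hxf hyf
    rcases Sym2.mem_iff.mp hyf with rfl | rfl
    · have : x ≠ z2 := fun h => hxf (h ▸ Sym2.mem_mk_right y z2)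
      exact key z2 ((G.mem_edgeSet).mp hfE) this
    · have : x ≠ y1 := fun h => hxf (h ▸ Sym2.mem_mk_left y1 y)
      exact key y1 ((G.mem_edgeSet).mp hfE).symm this
end Basics
section K4

variable {X : Type*}

lemma eds_two_le [Fintype X] {J : SimpleGraph X} (hcard : Fintype.card X = 4)
    (hadj : ∀ u v : X, J.Adj u v ↔ u ≠ v) {F : Set (Sym2 X)} (hF : IsEDS J F) :
    2 ≤ F.ncard := by
  classical
  obtain ⟨hsub, hdom⟩ := hF
  -- F is nonempty
  have h1lt : 1 < Fintype.card X := by rw [hcard]; omega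
  obtain ⟨v1, v2, hv12⟩ := Fintype.exists_pair_of_one_lt_card h1lt
  have he0 : s(v1, v2) ∈ J.edgeSet := (J.mem_edgeSet).mpr ((hadj v1 v2).mpr hv12)
  have hFne : F.Nonempty := by
    by_cases h : s(v1,v2) ∈ F
    · exact ⟨_, h⟩
    · obtain ⟨f, hf, -⟩ := hdom _ he0 h
      exact ⟨f, hf⟩
  obtain ⟨e, heF⟩ := hFne
  -- get two outside vertices
  revert heF
  induction e using Sym2.ind with
  | _ u1 u2 =>
  intro heF
  have hu12 : u1 ≠ u2 := ((hadj u1 u2).mp ((J.mem_edgeSet).mp (hsub heF)))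
  have hcard2 : 2 ≤ (Finset.univ \ {u1, u2} : Finset X).card := by
    have h1 : ({u1, u2} : Finset X).card = 2 := by
      rw [Finset.card_insert_of_notMem (by simp [hu12]), Finset.card_singleton]
    rw [Finset.card_sdiff_of_subset (Finset.subset_univ _), h1, Finset.card_univ, hcard]
  obtain ⟨v3, hv3, v4, hv4, hv34⟩ := Finset.one_lt_card.mp (lt_of_lt_of_le one_lt_two hcard2)
  simp only [Finset.mem_sdiff, Finset.mem_univ, Finset.mem_insert, Finset.mem_singleton,
    true_and, not_or] at hv3 hv4
  have hg : s(v3, v4) ∈ J.edgeSet := (J.mem_edgeSet).mpr ((hadj v3 v4).mpr hv34)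
  have hne : s(u1,u2) ≠ s(v3,v4) := by
    intro h
    rcases Sym2.eq_iff.mp h with ⟨h1, -⟩ | ⟨h1, -⟩
    · exact hv3.1 h1.symm
    · exact hv4.1 h1.symm
  by_cases hgF : s(v3, v4) ∈ F
  · calc 2 = ({s(u1,u2), s(v3,v4)} : Set (Sym2 X)).ncard := (Set.ncard_pair hne).symm
      _ ≤ F.ncard := Set.ncard_le_ncard (by rintro e (rfl | rfl) <;> assumption) (Set.toFinite F)
  · obtain ⟨f, hfF, v, hvg, hvf⟩ := hdom _ hg hgF
    have hfne : s(u1,u2) ≠ f := by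
      intro h
      rw [← h] at hvf
      rcases Sym2.mem_iff.mp hvg with rfl | rfl <;> rcases Sym2.mem_iff.mp hvf with h' | h'
      · exact hv3.1 h'
      · exact hv3.2 h'
      · exact hv4.1 h'
      · exact hv4.2 h'
    calc 2 = ({s(u1,u2), f} : Set (Sym2 X)).ncard := (Set.ncard_pair hfne).symm
      _ ≤ F.ncard := Set.ncard_le_ncard (by rintro e (rfl | rfl) <;> assumption) (Set.toFinite F)

lemma pair_isEDS [Fintype X] {J : SimpleGraph X} (hcard : Fintype.card X = 4)
    (hadj : ∀ u v : X, J.Adj u v ↔ u ≠ v) {e f : Sym2 X}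
    (he : e ∈ J.edgeSet) (hf : f ∈ J.edgeSet) (hef : e ≠ f) :
    IsEDS J ({e, f} : Set (Sym2 X)) := by
  classical
  constructor
  · rintro g (rfl | rfl) <;> assumption
  · intro g hg hgnot
    by_contra hno
    push_neg at hno
    have hnoe : ∀ v, v ∈ g → v ∉ e := fun v hv hv' => hno e (Or.inl rfl) v hv hv'
    have hnof : ∀ v, v ∈ g → v ∉ f := fun v hv hv' => hno f (Or.inr rfl) v hv hv'
    clear hno hgnot
    revert he hf hef hnoe hnof hg
    induction e using Sym2.ind with
    | _ u1 u2 =>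
    induction f using Sym2.ind with
    | _ w1 w2 =>
    induction g using Sym2.ind with
    | _ t1 t2 =>
    intro he hf hef hg hnoe hnof
    have hu : u1 ≠ u2 := (hadj u1 u2).mp ((J.mem_edgeSet).mp he)
    have ht : t1 ≠ t2 := (hadj t1 t2).mp ((J.mem_edgeSet).mp hg)
    have ht1 := Sym2.mem_iff.not.mp (hnoe t1 (Sym2.mem_mk_left t1 t2))
    have ht2 := Sym2.mem_iff.not.mp (hnoe t2 (Sym2.mem_mk_right t1 t2))
    have ht1f := Sym2.mem_iff.not.mp (hnof t1 (Sym2.mem_mk_left t1 t2))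
    have ht2f := Sym2.mem_iff.not.mp (hnof t2 (Sym2.mem_mk_right t1 t2))
    push_neg at ht1 ht2 ht1f ht2f
    have hwne : w1 ≠ w2 := (hadj w1 w2).mp ((J.mem_edgeSet).mp hf)
    -- some wi not in {u1, u2}
    have hw : ∃ w, (w = w1 ∨ w = w2) ∧ w ≠ u1 ∧ w ≠ u2 := by
      by_contra hnw
      push_neg at hnw
      have h1 : w1 = u1 ∨ w1 = u2 := by
        by_contra hc
        push_neg at hc
        exact hc.2 (hnw w1 (Or.inl rfl) hc.1)
      have h2 : w2 = u1 ∨ w2 = u2 := by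
        by_contra hc
        push_neg at hc
        exact hc.2 (hnw w2 (Or.inr rfl) hc.1)
      rcases h1 with h1 | h1 <;> rcases h2 with h2 | h2
      · exact hwne (h1.trans h2.symm)
      · exact hef (Sym2.eq_iff.mpr (Or.inl ⟨h1.symm, h2.symm⟩))
      · exact hef (Sym2.eq_iff.mpr (Or.inr ⟨h2.symm, h1.symm⟩))
      · exact hwne (h1.trans h2.symm)
    obtain ⟨w, hwmem, hwu1, hwu2⟩ := hw
    have hwt1 : t1 ≠ w := by
      rcases hwmem with rfl | rfl
      · exact ht1f.1
      · exact ht1f.2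
    have hwt2 : t2 ≠ w := by
      rcases hwmem with rfl | rfl
      · exact ht2f.1
      · exact ht2f.2
    have h5 : ({t1, t2, w, u1, u2} : Finset X).card = 5 := by
      rw [Finset.card_insert_of_notMem (by
            simp only [Finset.mem_insert, Finset.mem_singleton, not_or]
            exact ⟨ht, hwt1, ht1.1, ht1.2⟩),
          Finset.card_insert_of_notMem (by
            simp only [Finset.mem_insert, Finset.mem_singleton, not_or]
            exact ⟨hwt2, ht2.1, ht2.2⟩),
          Finset.card_insert_of_notMem (by
            simp only [Finset.mem_insert, Finset.mem_singleton, not_or]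
            exact ⟨hwu1, hwu2⟩),
          Finset.card_insert_of_notMem (by simp only [Finset.mem_singleton]; exact hu),
          Finset.card_singleton]
    have hle := Finset.card_le_univ ({t1, t2, w, u1, u2} : Finset X)
    rw [h5] at hle
    omega

end K4

section K4b
variable {X : Type*}

lemma wed_K4 [Fintype X] {J : SimpleGraph X} (hcard : Fintype.card X = 4)
    (hadj : ∀ u v : X, J.Adj u v ↔ u ≠ v) : WellEdgeDominated J := by
  intro F F' hF hF'
  have h2' : 2 ≤ F'.ncard := eds_two_le hcard hadj hF'
  have h2 : 2 ≤ F.ncard := eds_two_le hcard hadj hF.1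
  have hle : F.ncard ≤ 2 := by
    by_contra hgt
    push_neg at hgt
    obtain ⟨e, f, he, hf, hef⟩ := (Set.one_lt_ncard_iff (Set.toFinite F)).mp (by omega)
    have hsub : ({e, f} : Set (Sym2 X)) ⊆ F := by rintro g (rfl | rfl) <;> assumption
    have hss : ({e, f} : Set (Sym2 X)) ⊂ F := by
      refine ssubset_iff_subset_ne.mpr ⟨hsub, ?_⟩
      intro hEq
      rw [← hEq, Set.ncard_pair hef] at hgt
      omega
    exact hF.2 _ hss (pair_isEDS hcard hadj (hF.1.1 he) (hF.1.1 hf) hef)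
  omega

end K4b
section Cases

lemma strongProd_adj {G : SimpleGraph V} {H : SimpleGraph W} {p q : V × W} :
    (strongProd G H).Adj p q ↔
      p ≠ q ∧ (p.1 = q.1 ∨ G.Adj p.1 q.1) ∧ (p.2 = q.2 ∨ H.Adj p.2 q.2) := Iff.rfl

/-- Coverage of the "cross" T1 in a star × star strong product. -/
lemma covT1 {G : SimpleGraph V} {H : SimpleGraph W} {a : V} {b : W}
    (hGs : ∀ u v, G.Adj u v → u = a ∨ v = a)
    (hHs : ∀ w w', H.Adj w w' → w = b ∨ w' = b)
    {p1 q1 : V} {p2 q2 : W}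
    (hne : ¬(p1 = q1 ∧ p2 = q2))
    (hc1 : p1 = q1 ∨ G.Adj p1 q1) (hc2 : p2 = q2 ∨ H.Adj p2 q2)
    (hpz : ¬(p1 = a ∧ p2 = b)) (hqz : ¬(q1 = a ∧ q2 = b)) :
    ((p1 ≠ a ∧ p2 = b) ∨ (p1 = a ∧ p2 ≠ b)) ∨
    ((q1 ≠ a ∧ q2 = b) ∨ (q1 = a ∧ q2 ≠ b)) := by
  by_cases hp1 : p1 = a
  · exact Or.inl (Or.inr ⟨hp1, fun h => hpz ⟨hp1, h⟩⟩)
  · by_cases hq1 : q1 = a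
    · exact Or.inr (Or.inr ⟨hq1, fun h => hqz ⟨hq1, h⟩⟩)
    · by_cases hp2 : p2 = b
      · exact Or.inl (Or.inl ⟨hp1, hp2⟩)
      · by_cases hq2 : q2 = b
        · exact Or.inr (Or.inl ⟨hq1, hq2⟩)
        · exfalso
          have h1 : p1 = q1 := by
            rcases hc1 with h | h
            · exact h
            · rcases hGs _ _ h with h' | h'
              · exact absurd h' hp1
              · exact absurd h' hq1
          have h2 : p2 = q2 := by
            rcases hc2 with h | h
            · exact h
            · rcases hHs _ _ h with h' | h'
              · exact absurd h' hp2
              · exact absurd h' hq2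
          exact hne ⟨h1, h2⟩

/-- Coverage of T2 in a star × star strong product. -/
lemma covT2 {G : SimpleGraph V} {H : SimpleGraph W} {a : V} {b c : W}
    (hGs : ∀ u v, G.Adj u v → u = a ∨ v = a)
    (hHs : ∀ w w', H.Adj w w' → w = b ∨ w' = b)
    (hcb : c ≠ b)
    {p1 q1 : V} {p2 q2 : W}
    (hne : ¬(p1 = q1 ∧ p2 = q2))
    (hc1 : p1 = q1 ∨ G.Adj p1 q1) (hc2 : p2 = q2 ∨ H.Adj p2 q2)
    (hpz : ¬(p1 = a ∧ p2 = b)) (hqz : ¬(q1 = a ∧ q2 = b)) :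
    ((p1 ≠ a ∧ (p2 = b ∨ p2 = c)) ∨ (p1 = a ∧ p2 ≠ b ∧ p2 ≠ c)) ∨
    ((q1 ≠ a ∧ (q2 = b ∨ q2 = c)) ∨ (q1 = a ∧ q2 ≠ b ∧ q2 ≠ c)) := by
  by_cases hp1 : p1 = a <;> by_cases hq1 : q1 = a
  · -- both first coordinates are a
    exfalso
    have hp2 : p2 ≠ b := fun h => hpz ⟨hp1, h⟩
    have hq2 : q2 ≠ b := fun h => hqz ⟨hq1, h⟩
    have hne2 : p2 ≠ q2 := fun h => hne ⟨hp1.trans hq1.symm, h⟩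
    rcases hc2 with h | h
    · exact hne2 h
    · rcases hHs _ _ h with h' | h'
      · exact hp2 h'
      · exact hq2 h'
  · by_cases hq2c : q2 = b ∨ q2 = c
    · exact Or.inr (Or.inl ⟨hq1, hq2c⟩)
    · push_neg at hq2c
      by_cases hp2c : p2 = b ∨ p2 = c
      · exfalso
        have hp2 : p2 = c := by
          rcases hp2c with h | h
          · exact absurd ⟨hp1, h⟩ hpz
          · exact h
        rcases hc2 with h | h
        · exact hq2c.2 (h.symm.trans hp2)
        · rcases hHs _ _ h with h' | h'
          · exact hcb (hp2 ▸ h')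
          · exact hq2c.1 h'
      · push_neg at hp2c
        exact Or.inl (Or.inr ⟨hp1, hp2c⟩)
  · by_cases hp2c : p2 = b ∨ p2 = c
    · exact Or.inl (Or.inl ⟨hp1, hp2c⟩)
    · push_neg at hp2c
      by_cases hq2c : q2 = b ∨ q2 = c
      · exfalso
        have hq2 : q2 = c := by
          rcases hq2c with h | h
          · exact absurd ⟨hq1, h⟩ hqz
          · exact h
        rcases hc2 with h | h
        · exact hp2c.2 (h.trans hq2)
        · rcases hHs _ _ h with h' | h'
          · exact hp2c.1 h'
          · exact hcb (hq2 ▸ h')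
      · push_neg at hq2c
        exact Or.inr (Or.inr ⟨hq1, hq2c⟩)
  · by_cases hp2c : p2 = b ∨ p2 = c
    · exact Or.inl (Or.inl ⟨hp1, hp2c⟩)
    · by_cases hq2c : q2 = b ∨ q2 = c
      · exact Or.inr (Or.inl ⟨hq1, hq2c⟩)
      · exfalso
        push_neg at hp2c hq2c
        have h1 : p1 = q1 := by
          rcases hc1 with h | h
          · exact h
          · rcases hGs _ _ h with h' | h'
            · exact absurd h' hp1
            · exact absurd h' hq1
        have h2 : p2 = q2 := by
          rcases hc2 with h | h
          · exact h
          · rcases hHs _ _ h with h' | h'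
            · exact absurd h' hp2c.1
            · exact absurd h' hq2c.1
        exact hne ⟨h1, h2⟩

end Cases
section StarStar

lemma notWED_star_star [Fintype V] [Fintype W] {G : SimpleGraph V} {H : SimpleGraph W}
    (a x x' : V) (b c : W)
    (hxa : x ≠ a) (hx'a : x' ≠ a) (hxx' : x ≠ x')
    (hGa : ∀ v, v ≠ a → G.Adj a v) (hGs : ∀ u v, G.Adj u v → u = a ∨ v = a)
    (hcb : c ≠ b) (hHb : ∀ w, w ≠ b → H.Adj b w) (hHs : ∀ w w', H.Adj w w' → w = b ∨ w' = b) :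
    ¬ WellEdgeDominated (strongProd G H) := by
  classical
  have hzuniv : ∀ p : V × W, p ≠ (a, b) → (strongProd G H).Adj (a, b) p := by
    rintro ⟨p1, p2⟩ hp
    refine ⟨fun h => hp h.symm, ?_, ?_⟩
    · by_cases h1 : p1 = a
      · exact Or.inl h1.symm
      · exact Or.inr (hGa p1 h1)
    · by_cases h2 : p2 = b
      · exact Or.inl h2.symm
      · exact Or.inr (hHb p2 h2)
  set T1 : Set (V × W) := {p | (p.1 ≠ a ∧ p.2 = b) ∨ (p.1 = a ∧ p.2 ≠ b)} with hT1
  set T2 : Set (V × W) :=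
    {p | (p.1 ≠ a ∧ (p.2 = b ∨ p.2 = c)) ∨ (p.1 = a ∧ p.2 ≠ b ∧ p.2 ≠ c)} with hT2
  have hnz1 : ∀ t ∈ T1, t ≠ (a, b) := by
    rintro ⟨t1, t2⟩ (⟨h1, -⟩ | ⟨-, h2⟩) h
    · exact h1 (congrArg Prod.fst h)
    · exact h2 (congrArg Prod.snd h)
  have hnz2 : ∀ t ∈ T2, t ≠ (a, b) := by
    rintro ⟨t1, t2⟩ (⟨h1, -⟩ | ⟨-, h2, -⟩) h
    · exact h1 (congrArg Prod.fst h)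
    · exact h2 (congrArg Prod.snd h)
  have hadj1 : ∀ t ∈ T1, (strongProd G H).Adj (a, b) t := fun t ht => hzuniv t (hnz1 t ht)
  have hadj2 : ∀ t ∈ T2, (strongProd G H).Adj (a, b) t := fun t ht => hzuniv t (hnz2 t ht)
  have hne1 : T1.Nonempty := ⟨(x, b), Or.inl ⟨hxa, rfl⟩⟩
  have hne2 : T2.Nonempty := ⟨(x, b), Or.inl ⟨hxa, Or.inl rfl⟩⟩
  have hcov1 : ∀ e ∈ (strongProd G H).edgeSet, (a, b) ∉ e → ∃ t ∈ T1, t ∈ e := by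
    intro e
    induction e using Sym2.ind with
    | _ p q =>
    obtain ⟨p1, p2⟩ := p
    obtain ⟨q1, q2⟩ := q
    intro he hzz
    rw [Sym2.mem_iff] at hzz
    push_neg at hzz
    obtain ⟨hne, hc1, hc2⟩ := strongProd_adj.mp ((strongProd G H).mem_edgeSet.mp he)
    have hne' : ¬(p1 = q1 ∧ p2 = q2) := fun ⟨h1, h2⟩ => hne (by rw [h1, h2])
    have hpz : ¬(p1 = a ∧ p2 = b) := fun ⟨h1, h2⟩ => hzz.1 (by rw [h1, h2])
    have hqz : ¬(q1 = a ∧ q2 = b) := fun ⟨h1, h2⟩ => hzz.2 (by rw [h1, h2])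
    rcases covT1 hGs hHs hne' hc1 hc2 hpz hqz with h | h
    · exact ⟨(p1, p2), h, Sym2.mem_mk_left _ _⟩
    · exact ⟨(q1, q2), h, Sym2.mem_mk_right _ _⟩
  have hcov2 : ∀ e ∈ (strongProd G H).edgeSet, (a, b) ∉ e → ∃ t ∈ T2, t ∈ e := by
    intro e
    induction e using Sym2.ind with
    | _ p q =>
    obtain ⟨p1, p2⟩ := p
    obtain ⟨q1, q2⟩ := q
    intro he hzz
    rw [Sym2.mem_iff] at hzz
    push_neg at hzz
    obtain ⟨hne, hc1, hc2⟩ := strongProd_adj.mp ((strongProd G H).mem_edgeSet.mp he)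
    have hne' : ¬(p1 = q1 ∧ p2 = q2) := fun ⟨h1, h2⟩ => hne (by rw [h1, h2])
    have hpz : ¬(p1 = a ∧ p2 = b) := fun ⟨h1, h2⟩ => hzz.1 (by rw [h1, h2])
    have hqz : ¬(q1 = a ∧ q2 = b) := fun ⟨h1, h2⟩ => hzz.2 (by rw [h1, h2])
    rcases covT2 hGs hHs hcb hne' hc1 hc2 hpz hqz with h | h
    · exact ⟨(p1, p2), h, Sym2.mem_mk_left _ _⟩
    · exact ⟨(q1, q2), h, Sym2.mem_mk_right _ _⟩
  have hpriv2 : ∀ t ∈ T2, ∃ e ∈ (strongProd G H).edgeSet,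
      t ∈ e ∧ (a, b) ∉ e ∧ ∀ t' ∈ T2, t' ∈ e → t' = t := by
    rintro ⟨t1, t2⟩ (⟨ht1, ht2⟩ | ⟨ht1, ht2⟩)
    · refine ⟨s((t1, t2), (a, c)), ?_, Sym2.mem_mk_left _ _, ?_, ?_⟩
      · refine (strongProd G H).mem_edgeSet.mpr (strongProd_adj.mpr ⟨?_, ?_, ?_⟩)
        · exact fun h => ht1 (congrArg Prod.fst h)
        · exact Or.inr ((hGa t1 ht1).symm)
        · rcases ht2 with rfl | rfl
          · exact Or.inr (hHb c hcb)
          · exact Or.inl rfl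
      · intro hmem
        rcases Sym2.mem_iff.mp hmem with h | h
        · exact ht1 (congrArg Prod.fst h).symm
        · exact hcb (congrArg Prod.snd h).symm
      · rintro ⟨s1, s2⟩ hs hmem
        rcases Sym2.mem_iff.mp hmem with h | h
        · exact h
        · exfalso
          have h1 : s1 = a := congrArg Prod.fst h
          have h2 : s2 = c := congrArg Prod.snd h
          rcases hs with ⟨hs1, -⟩ | ⟨-, -, hs3⟩
          · exact hs1 h1
          · exact hs3 h2
    · refine ⟨s((t1, t2), (x, t2)), ?_, Sym2.mem_mk_left _ _, ?_, ?_⟩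
      · refine (strongProd G H).mem_edgeSet.mpr (strongProd_adj.mpr ⟨?_, ?_, ?_⟩)
        · intro h
          exact hxa ((congrArg Prod.fst h).symm.trans ht1)
        · exact Or.inr (ht1 ▸ hGa x hxa)
        · exact Or.inl rfl
      · intro hmem
        rcases Sym2.mem_iff.mp hmem with h | h
        · exact ht2.1 (congrArg Prod.snd h).symm
        · exact hxa (congrArg Prod.fst h).symm
      · rintro ⟨s1, s2⟩ hs hmem
        rcases Sym2.mem_iff.mp hmem with h | h
        · exact h
        · exfalso
          have h1 : s1 = x := congrArg Prod.fst h
          have h2 : s2 = t2 := congrArg Prod.snd h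
          rcases hs with ⟨-, hs2⟩ | ⟨hs1, -⟩
          · rcases hs2 with h' | h'
            · exact ht2.1 (h2 ▸ h')
            · exact ht2.2 (h2 ▸ h')
          · exact hxa (h1 ▸ hs1)
  have hminl := starMinlEDS (strongProd G H) (a, b) T2 hadj2 hne2 hcov2 hpriv2
  have heds1 := starEDS (strongProd G H) (a, b) T1 hadj1 hne1 hcov1
  -- injection from T1 into T2 missing (x', c)
  set j : V × W → V × W := fun p => if p = (a, c) then (x, c) else p with hjdef
  have hj : ∀ p : V × W, j p = if p = (a, c) then (x, c) else p := fun _ => rfl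
  have hxcT1 : ((x, c) : V × W) ∉ T1 := by
    rintro (⟨-, h2⟩ | ⟨h1, -⟩)
    · exact hcb h2
    · exact hxa h1
  have hinj : Set.InjOn j T1 := by
    intro p hp q hq h
    by_cases cp : p = (a, c) <;> by_cases cq : q = (a, c)
    · rw [cp, cq]
    · rw [hj, hj, if_pos cp, if_neg cq] at h
      exact absurd (h ▸ hq) hxcT1
    · rw [hj, hj, if_neg cp, if_pos cq] at h
      exact absurd (h ▸ hp) hxcT1
    · rwa [hj, hj, if_neg cp, if_neg cq] at h
  have himg : j '' T1 ⊆ T2 := by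
    rintro _ ⟨⟨p1, p2⟩, hp, rfl⟩
    by_cases cp : ((p1, p2) : V × W) = (a, c)
    · rw [hj, if_pos cp]
      exact Or.inl ⟨hxa, Or.inr rfl⟩
    · rw [hj, if_neg cp]
      rcases hp with ⟨h1, h2⟩ | ⟨h1, h2⟩
      · exact Or.inl ⟨h1, Or.inl h2⟩
      · exact Or.inr ⟨h1, h2, fun hc' => cp (Prod.ext h1 hc')⟩
  have hss : j '' T1 ⊂ T2 := by
    rw [Set.ssubset_iff_of_subset himg]
    refine ⟨(x', c), Or.inl ⟨hx'a, Or.inr rfl⟩, ?_⟩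
    rintro ⟨⟨p1, p2⟩, hp, heq⟩
    by_cases cp : ((p1, p2) : V × W) = (a, c)
    · rw [hj, if_pos cp] at heq
      exact hxx' (congrArg Prod.fst heq)
    · rw [hj, if_neg cp] at heq
      have h1 : p1 = x' := congrArg Prod.fst heq
      have h2 : p2 = c := congrArg Prod.snd heq
      rcases hp with ⟨-, hp2⟩ | ⟨hp1, -⟩
      · exact hcb (h2 ▸ hp2)
      · exact hx'a (h1 ▸ hp1)
  intro hwed
  have hmain := hwed _ _ hminl heds1
  rw [star_ncard _ _ _ hadj2, star_ncard _ _ _ hadj1] at hmain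
  have h2 : T1.ncard = (j '' T1).ncard := (Set.ncard_image_of_injOn hinj).symm
  have h3 : (j '' T1).ncard < T2.ncard := Set.ncard_lt_ncard hss (Set.toFinite _)
  omega

end StarStar
section StarK3

lemma notWED_star_K3 [Fintype V] [Fintype W] {G : SimpleGraph V} {H : SimpleGraph W}
    (a x : V) (b c d : W)
    (hxa : x ≠ a)
    (hGa : ∀ v, v ≠ a → G.Adj a v) (hGs : ∀ u v, G.Adj u v → u = a ∨ v = a)
    (hbc : b ≠ c) (hbd : b ≠ d) (hcd : c ≠ d)
    (hK : ∀ w w' : W, w ≠ w' → H.Adj w w') (hWall : ∀ w : W, w = b ∨ w = c ∨ w = d) :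
    ¬ WellEdgeDominated (strongProd G H) := by
  classical
  have hzuniv : ∀ p : V × W, p ≠ (a, b) → (strongProd G H).Adj (a, b) p := by
    rintro ⟨p1, p2⟩ hp
    refine ⟨fun h => hp h.symm, ?_, ?_⟩
    · by_cases h1 : p1 = a
      · exact Or.inl h1.symm
      · exact Or.inr (hGa p1 h1)
    · by_cases h2 : p2 = b
      · exact Or.inl h2.symm
      · exact Or.inr (hK b p2 (fun h => h2 h.symm))
  set TA : Set (V × W) :=
    {p | (p.1 ≠ a ∧ (p.2 = b ∨ p.2 = c)) ∨ (p.1 = a ∧ (p.2 = c ∨ p.2 = d))} with hTA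
  set I : Set (V × W) :=
    {p | (p.1 ≠ a ∧ p.2 = b) ∨ (p.1 = a ∧ (p.2 = c ∨ p.2 = d))} with hI
  have hnzA : ∀ t ∈ TA, t ≠ (a, b) := by
    rintro ⟨t1, t2⟩ (⟨h1, -⟩ | ⟨-, h2⟩) h
    · exact h1 (congrArg Prod.fst h)
    · rcases h2 with h2 | h2
      · exact hbc (((congrArg Prod.snd h).symm).trans h2)
      · exact hbd (((congrArg Prod.snd h).symm).trans h2)
  have hadjA : ∀ t ∈ TA, (strongProd G H).Adj (a, b) t := fun t ht => hzuniv t (hnzA t ht)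
  have hneA : TA.Nonempty := ⟨(x, b), Or.inl ⟨hxa, Or.inl rfl⟩⟩
  have hcovA : ∀ e ∈ (strongProd G H).edgeSet, (a, b) ∉ e → ∃ t ∈ TA, t ∈ e := by
    intro e
    induction e using Sym2.ind with
    | _ p q =>
    obtain ⟨p1, p2⟩ := p
    obtain ⟨q1, q2⟩ := q
    intro he hzz
    rw [Sym2.mem_iff] at hzz
    push_neg at hzz
    obtain ⟨hne, hc1, hc2⟩ := strongProd_adj.mp ((strongProd G H).mem_edgeSet.mp he)
    have hne' : ¬(p1 = q1 ∧ p2 = q2) := fun ⟨h1, h2⟩ => hne (by rw [h1, h2])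
    have hpz : ¬(p1 = a ∧ p2 = b) := fun ⟨h1, h2⟩ => hzz.1 (by rw [h1, h2])
    have hqz : ¬(q1 = a ∧ q2 = b) := fun ⟨h1, h2⟩ => hzz.2 (by rw [h1, h2])
    suffices h : (((p1,p2) : V × W) ∈ TA) ∨ (((q1,q2) : V × W) ∈ TA) by
      rcases h with h | h
      · exact ⟨(p1, p2), h, Sym2.mem_mk_left _ _⟩
      · exact ⟨(q1, q2), h, Sym2.mem_mk_right _ _⟩
    by_cases hp1 : p1 = a
    · by_cases hp2 : p2 = c ∨ p2 = d
      · exact Or.inl (Or.inr ⟨hp1, hp2⟩)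
      · push_neg at hp2
        exfalso
        rcases hWall p2 with h | h | h
        · exact hpz ⟨hp1, h⟩
        · exact hp2.1 h
        · exact hp2.2 h
    · by_cases hq1 : q1 = a
      · by_cases hq2 : q2 = c ∨ q2 = d
        · exact Or.inr (Or.inr ⟨hq1, hq2⟩)
        · push_neg at hq2
          exfalso
          rcases hWall q2 with h | h | h
          · exact hqz ⟨hq1, h⟩
          · exact hq2.1 h
          · exact hq2.2 h
      · by_cases hp2 : p2 = b ∨ p2 = c
        · exact Or.inl (Or.inl ⟨hp1, hp2⟩)
        · by_cases hq2 : q2 = b ∨ q2 = c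
          · exact Or.inr (Or.inl ⟨hq1, hq2⟩)
          · push_neg at hp2 hq2
            exfalso
            have hp2d : p2 = d := by
              rcases hWall p2 with h | h | h
              · exact absurd h hp2.1
              · exact absurd h hp2.2
              · exact h
            have hq2d : q2 = d := by
              rcases hWall q2 with h | h | h
              · exact absurd h hq2.1
              · exact absurd h hq2.2
              · exact h
            have h1 : p1 = q1 := by
              rcases hc1 with h | h
              · exact h
              · rcases hGs _ _ h with h' | h'
                · exact absurd h' hp1
                · exact absurd h' hq1
            exact hne' ⟨h1, hp2d.trans hq2d.symm⟩
  have hprivA : ∀ t ∈ TA, ∃ e ∈ (strongProd G H).edgeSet,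
      t ∈ e ∧ (a, b) ∉ e ∧ ∀ t' ∈ TA, t' ∈ e → t' = t := by
    rintro ⟨t1, t2⟩ (⟨ht1, ht2⟩ | ⟨ht1, ht2⟩)
    · -- t = (t1, t2), t1 ≠ a, t2 ∈ {b, c}
      have ht2d : t2 ≠ d := by
        rcases ht2 with rfl | rfl
        · exact hbd
        · exact hcd
      refine ⟨s((t1, t2), (t1, d)), ?_, Sym2.mem_mk_left _ _, ?_, ?_⟩
      · refine (strongProd G H).mem_edgeSet.mpr (strongProd_adj.mpr ⟨?_, ?_, ?_⟩)
        · exact fun h => ht2d (congrArg Prod.snd h)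
        · exact Or.inl rfl
        · exact Or.inr (hK t2 d ht2d)
      · intro hmem
        rcases Sym2.mem_iff.mp hmem with h | h
        · exact ht1 (congrArg Prod.fst h).symm
        · exact ht1 (congrArg Prod.fst h).symm
      · rintro ⟨s1, s2⟩ hs hmem
        rcases Sym2.mem_iff.mp hmem with h | h
        · exact h
        · exfalso
          have h1 : s1 = t1 := congrArg Prod.fst h
          have h2 : s2 = d := congrArg Prod.snd h
          rcases hs with ⟨-, hs2⟩ | ⟨hs1, -⟩
          · rcases hs2 with h' | h'
            · exact hbd (h2 ▸ h').symm
            · exact hcd (h2 ▸ h').symm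
          · exact ht1 (h1 ▸ hs1)
    · -- t = (a, t2), t2 ∈ {c, d}
      refine ⟨s((t1, t2), (x, d)), ?_, Sym2.mem_mk_left _ _, ?_, ?_⟩
      · refine (strongProd G H).mem_edgeSet.mpr (strongProd_adj.mpr ⟨?_, ?_, ?_⟩)
        · intro hcon
          exact hxa ((congrArg Prod.fst hcon).symm.trans ht1)
        · refine Or.inr ?_
          rw [ht1]
          exact hGa x hxa
        · rcases ht2 with h2 | h2
          · refine Or.inr ?_
            rw [h2]
            exact hK c d hcd
          · exact Or.inl h2
      · intro hmem
        rcases Sym2.mem_iff.mp hmem with hcon | hcon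
        · rcases ht2 with h2 | h2
          · exact hbc ((congrArg Prod.snd hcon).trans h2)
          · exact hbd ((congrArg Prod.snd hcon).trans h2)
        · exact hxa (congrArg Prod.fst hcon).symm
      · rintro ⟨s1, s2⟩ hs hmem
        rcases Sym2.mem_iff.mp hmem with hcon | hcon
        · exact hcon
        · exfalso
          have h1 : s1 = x := congrArg Prod.fst hcon
          have h2 : s2 = d := congrArg Prod.snd hcon
          rcases hs with ⟨-, hs2⟩ | ⟨hs1, -⟩
          · rcases hs2 with h' | h'
            · exact hbd (h2 ▸ h').symm
            · exact hcd (h2 ▸ h').symm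
          · exact hxa (h1 ▸ hs1)
  have hminl := starMinlEDS (strongProd G H) (a, b) TA hadjA hneA hcovA hprivA
  -- the small edge dominating set F'
  set h : V × W → Sym2 (V × W) := fun p =>
    if p.1 = a then (if p.2 = c then s(((a : V), (b : W)), ((a : V), (c : W))) else s(((a : V), (d : W)), ((x : V), (d : W))))
    else s((p.1, (b : W)), (p.1, (c : W))) with hh
  have e1 : h (a, c) = s(((a : V), (b : W)), ((a : V), (c : W))) := by simp [hh]
  have e3 : h (a, d) = s(((a : V), (d : W)), ((x : V), (d : W))) := by
    simp [hh, (Ne.symm hcd : d ≠ c)]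
  have e2 : ∀ u : V, u ≠ a → h (u, b) = s((u, (b : W)), (u, (c : W))) := by
    intro u hu
    simp [hh, hu]
  set F' : Set (Sym2 (V × W)) := h '' I with hF'
  have hmemf1 : h (a, c) ∈ F' := ⟨(a, c), Or.inr ⟨rfl, Or.inl rfl⟩, rfl⟩
  have hmemf3 : h (a, d) ∈ F' := ⟨(a, d), Or.inr ⟨rfl, Or.inr rfl⟩, rfl⟩
  have hmemf2 : ∀ u : V, u ≠ a → h (u, b) ∈ F' := fun u hu => ⟨(u, b), Or.inl ⟨hu, rfl⟩, rfl⟩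
  have hedsF' : IsEDS (strongProd G H) F' := by
    constructor
    · rintro _ ⟨⟨p1, p2⟩, hp, rfl⟩
      rcases hp with ⟨h1, h2⟩ | ⟨h1, h2⟩
      · have h2' : p2 = b := h2
        have h1' : p1 ≠ a := h1
        rw [h2', e2 p1 h1']
        refine (strongProd G H).mem_edgeSet.mpr (strongProd_adj.mpr ⟨?_, Or.inl rfl, Or.inr (hK b c hbc)⟩)
        exact fun hcon => hbc (congrArg Prod.snd hcon)
      · have h1' : p1 = a := h1
        have h2' : p2 = c ∨ p2 = d := h2
        rw [h1']
        rcases h2' with h2' | h2'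
        · rw [h2', e1]
          refine (strongProd G H).mem_edgeSet.mpr (strongProd_adj.mpr ⟨?_, Or.inl rfl, Or.inr (hK b c hbc)⟩)
          exact fun hcon => hbc (congrArg Prod.snd hcon)
        · rw [h2', e3]
          refine (strongProd G H).mem_edgeSet.mpr (strongProd_adj.mpr ⟨?_, Or.inr (hGa x hxa), Or.inl rfl⟩)
          exact fun hcon => hxa (congrArg Prod.fst hcon).symm
    · intro e he hef
      clear hef
      have hfind : ∀ s1 : V, ∀ s2 : W,
          (s2 = b ∨ s2 = c ∨ (s1 = a ∧ s2 = d) ∨ (s1 = x ∧ s2 = d)) →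
          ∃ f ∈ F', ((s1, s2) : V × W) ∈ f := by
        intro s1 s2 hcase
        rcases hcase with h2 | h2 | ⟨h1, h2⟩ | ⟨h1, h2⟩
        · rw [h2]
          by_cases hs1 : s1 = a
          · rw [hs1]
            exact ⟨h (a, c), hmemf1, by rw [e1]; exact Sym2.mem_mk_left _ _⟩
          · exact ⟨h (s1, b), hmemf2 s1 hs1, by rw [e2 s1 hs1]; exact Sym2.mem_mk_left _ _⟩
        · rw [h2]
          by_cases hs1 : s1 = a
          · rw [hs1]
            exact ⟨h (a, c), hmemf1, by rw [e1]; exact Sym2.mem_mk_right _ _⟩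
          · exact ⟨h (s1, b), hmemf2 s1 hs1, by rw [e2 s1 hs1]; exact Sym2.mem_mk_right _ _⟩
        · rw [h1, h2]
          exact ⟨h (a, d), hmemf3, by rw [e3]; exact Sym2.mem_mk_left _ _⟩
        · rw [h1, h2]
          exact ⟨h (a, d), hmemf3, by rw [e3]; exact Sym2.mem_mk_right _ _⟩
      revert he
      induction e using Sym2.ind with
      | _ p q =>
      obtain ⟨p1, p2⟩ := p
      obtain ⟨q1, q2⟩ := q
      intro he
      obtain ⟨hne, hc1, hc2⟩ := strongProd_adj.mp ((strongProd G H).mem_edgeSet.mp he)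
      suffices hgood : (p2 = b ∨ p2 = c ∨ (p1 = a ∧ p2 = d) ∨ (p1 = x ∧ p2 = d)) ∨
          (q2 = b ∨ q2 = c ∨ (q1 = a ∧ q2 = d) ∨ (q1 = x ∧ q2 = d)) by
        rcases hgood with h' | h'
        · obtain ⟨f, hf, hmem⟩ := hfind p1 p2 h'
          exact ⟨f, hf, (p1, p2), Sym2.mem_mk_left _ _, hmem⟩
        · obtain ⟨f, hf, hmem⟩ := hfind q1 q2 h'
          exact ⟨f, hf, (q1, q2), Sym2.mem_mk_right _ _, hmem⟩
      by_contra hbad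
      push_neg at hbad
      obtain ⟨⟨hpb, hpc, hpad, hpxd⟩, ⟨hqb, hqc, hqad, hqxd⟩⟩ := hbad
      have hp2d : p2 = d := by
        rcases hWall p2 with h' | h' | h'
        · exact absurd h' hpb
        · exact absurd h' hpc
        · exact h'
      have hq2d : q2 = d := by
        rcases hWall q2 with h' | h' | h'
        · exact absurd h' hqb
        · exact absurd h' hqc
        · exact h'
      have hp1 : p1 ≠ a := fun h' => hpad h' hp2d
      have hq1 : q1 ≠ a := fun h' => hqad h' hq2d
      have h1 : p1 = q1 := by
        rcases hc1 with h' | h'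
        · exact h'
        · rcases hGs _ _ h' with h'' | h''
          · exact absurd h'' hp1
          · exact absurd h'' hq1
      exact hne (by rw [h1, hp2d, hq2d])
  -- conclude
  have hIsub : I ⊆ TA := by
    rintro ⟨p1, p2⟩ (⟨h1, h2⟩ | ⟨h1, h2⟩)
    · exact Or.inl ⟨h1, Or.inl h2⟩
    · exact Or.inr ⟨h1, h2⟩
  have hss : I ⊂ TA := by
    rw [Set.ssubset_iff_of_subset hIsub]
    refine ⟨(x, c), Or.inl ⟨hxa, Or.inr rfl⟩, ?_⟩
    rintro (⟨-, h2⟩ | ⟨h1, -⟩)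
    · exact hbc h2.symm
    · exact hxa h1
  intro hwed
  have hmain := hwed _ _ hminl hedsF'
  rw [star_ncard _ _ _ hadjA] at hmain
  have h2 : F'.ncard ≤ I.ncard := Set.ncard_image_le (Set.toFinite _)
  have h3 : I.ncard < TA.ncard := Set.ncard_lt_ncard hss (Set.toFinite _)
  omega

end StarK3
section K3K3

lemma notWED_K3_K3 [Fintype V] [Fintype W] {G : SimpleGraph V} {H : SimpleGraph W}
    (a x y : V) (b c d : W)
    (hax : a ≠ x) (hay : a ≠ y) (hxy : x ≠ y)
    (hbc : b ≠ c) (hbd : b ≠ d) (hcd : c ≠ d)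
    (hGK : ∀ u v : V, u ≠ v → G.Adj u v) (hVall : ∀ v : V, v = a ∨ v = x ∨ v = y)
    (hHK : ∀ w w' : W, w ≠ w' → H.Adj w w') (hWall : ∀ w : W, w = b ∨ w = c ∨ w = d) :
    ¬ WellEdgeDominated (strongProd G H) := by
  classical
  have hcomp : ∀ s t : V × W, s ≠ t → (strongProd G H).Adj s t := by
    rintro ⟨s1, s2⟩ ⟨t1, t2⟩ hst
    refine ⟨hst, ?_, ?_⟩
    · by_cases h1 : s1 = t1
      · exact Or.inl h1
      · exact Or.inr (hGK _ _ h1)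
    · by_cases h2 : s2 = t2
      · exact Or.inl h2
      · exact Or.inr (hHK _ _ h2)
  set T : Set (V × W) := {s | s ≠ (a, b) ∧ s ≠ (y, d)} with hT
  have hadjT : ∀ t ∈ T, (strongProd G H).Adj (a, b) t := fun t ht => hcomp _ _ (Ne.symm ht.1)
  have hneT : T.Nonempty := by
    refine ⟨(x, b), fun h => hax (congrArg Prod.fst h).symm, fun h => hxy (congrArg Prod.fst h)⟩
  have hcovT : ∀ e ∈ (strongProd G H).edgeSet, (a, b) ∉ e → ∃ t ∈ T, t ∈ e := by
    intro e
    induction e using Sym2.ind with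
    | _ P Q =>
    intro he hzz
    rw [Sym2.mem_iff] at hzz
    push_neg at hzz
    obtain ⟨hne, -, -⟩ := strongProd_adj.mp ((strongProd G H).mem_edgeSet.mp he)
    by_cases hP : P = (y, d)
    · refine ⟨Q, ⟨fun h => hzz.2 h.symm, fun h => hne (hP.trans h.symm)⟩, Sym2.mem_mk_right _ _⟩
    · exact ⟨P, ⟨fun h => hzz.1 h.symm, hP⟩, Sym2.mem_mk_left _ _⟩
  have hprivT : ∀ t ∈ T, ∃ e ∈ (strongProd G H).edgeSet,
      t ∈ e ∧ (a, b) ∉ e ∧ ∀ t' ∈ T, t' ∈ e → t' = t := by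
    intro t ht
    refine ⟨s(t, ((y : V), (d : W))), (strongProd G H).mem_edgeSet.mpr (hcomp _ _ ht.2), Sym2.mem_mk_left _ _, ?_, ?_⟩
    · intro hmem
      rcases Sym2.mem_iff.mp hmem with h | h
      · exact ht.1 h.symm
      · exact hay (congrArg Prod.fst h)
    · intro t' ht' hmem
      rcases Sym2.mem_iff.mp hmem with h | h
      · exact h
      · exact absurd h ht'.2
  have hminl := starMinlEDS (strongProd G H) (a, b) T hadjT hneT hcovT hprivT
  set I : Set (V × W) := {(a, c), (x, b), (y, b), (x, d)} with hI
  set h : V × W → Sym2 (V × W) := fun s =>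
    if s.1 = a then s(((a : V), (c : W)), ((a : V), (d : W)))
    else if s.2 = b then s((s.1, (b : W)), (s.1, (c : W)))
    else s(((x : V), (d : W)), ((y : V), (d : W))) with hh
  have e1 : h (a, c) = s(((a : V), (c : W)), ((a : V), (d : W))) := by simp [hh]
  have e2 : h (x, b) = s(((x : V), (b : W)), ((x : V), (c : W))) := by
    simp [hh, (Ne.symm hax : x ≠ a)]
  have e3 : h (y, b) = s(((y : V), (b : W)), ((y : V), (c : W))) := by
    simp [hh, (Ne.symm hay : y ≠ a)]
  have e4 : h (x, d) = s(((x : V), (d : W)), ((y : V), (d : W))) := by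
    simp [hh, (Ne.symm hax : x ≠ a), (Ne.symm hbd : d ≠ b)]
  set F' : Set (Sym2 (V × W)) := h '' I with hF'
  have hm1 : h (a, c) ∈ F' := ⟨(a, c), Set.mem_insert _ _, rfl⟩
  have hm2 : h (x, b) ∈ F' :=
    ⟨(x, b), Set.mem_insert_of_mem _ (Set.mem_insert _ _), rfl⟩
  have hm3 : h (y, b) ∈ F' :=
    ⟨(y, b), Set.mem_insert_of_mem _ (Set.mem_insert_of_mem _ (Set.mem_insert _ _)), rfl⟩
  have hm4 : h (x, d) ∈ F' :=
    ⟨(x, d), Set.mem_insert_of_mem _ (Set.mem_insert_of_mem _ (Set.mem_insert_of_mem _ rfl)), rfl⟩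
  have hfind : ∀ s : V × W, s ≠ (a, b) → ∃ f ∈ F', s ∈ f := by
    rintro ⟨s1, s2⟩ hs
    rcases hVall s1 with h1 | h1 | h1 <;> rcases hWall s2 with h2 | h2 | h2 <;> rw [h1, h2]
    · exact absurd (by rw [h1, h2]) hs
    · exact ⟨h (a, c), hm1, by rw [e1]; exact Sym2.mem_mk_left _ _⟩
    · exact ⟨h (a, c), hm1, by rw [e1]; exact Sym2.mem_mk_right _ _⟩
    · exact ⟨h (x, b), hm2, by rw [e2]; exact Sym2.mem_mk_left _ _⟩
    · exact ⟨h (x, b), hm2, by rw [e2]; exact Sym2.mem_mk_right _ _⟩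
    · exact ⟨h (x, d), hm4, by rw [e4]; exact Sym2.mem_mk_left _ _⟩
    · exact ⟨h (y, b), hm3, by rw [e3]; exact Sym2.mem_mk_left _ _⟩
    · exact ⟨h (y, b), hm3, by rw [e3]; exact Sym2.mem_mk_right _ _⟩
    · exact ⟨h (x, d), hm4, by rw [e4]; exact Sym2.mem_mk_right _ _⟩
  have hedsF' : IsEDS (strongProd G H) F' := by
    constructor
    · rintro _ ⟨s, hs, rfl⟩
      simp only [hI, Set.mem_insert_iff, Set.mem_singleton_iff] at hs
      rcases hs with rfl | rfl | rfl | rfl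
      · rw [e1]
        exact (strongProd G H).mem_edgeSet.mpr (hcomp _ _ (fun hcon => hcd (congrArg Prod.snd hcon)))
      · rw [e2]
        exact (strongProd G H).mem_edgeSet.mpr (hcomp _ _ (fun hcon => hbc (congrArg Prod.snd hcon)))
      · rw [e3]
        exact (strongProd G H).mem_edgeSet.mpr (hcomp _ _ (fun hcon => hbc (congrArg Prod.snd hcon)))
      · rw [e4]
        exact (strongProd G H).mem_edgeSet.mpr (hcomp _ _ (fun hcon => hxy (congrArg Prod.fst hcon)))
    · intro e he hef
      clear hef
      revert he
      induction e using Sym2.ind with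
      | _ P Q =>
      intro he
      obtain ⟨hne, -, -⟩ := strongProd_adj.mp ((strongProd G H).mem_edgeSet.mp he)
      by_cases hP : P = (a, b)
      · obtain ⟨f, hf, hmem⟩ := hfind Q (fun h => hne (hP.trans h.symm))
        exact ⟨f, hf, Q, Sym2.mem_mk_right _ _, hmem⟩
      · obtain ⟨f, hf, hmem⟩ := hfind P hP
        exact ⟨f, hf, P, Sym2.mem_mk_left _ _, hmem⟩
  have hIsub : I ⊆ T := by
    intro s hs
    simp only [hI, Set.mem_insert_iff, Set.mem_singleton_iff] at hs
    rcases hs with rfl | rfl | rfl | rfl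
    · exact ⟨fun hcon => hbc (congrArg Prod.snd hcon).symm, fun hcon => hay (congrArg Prod.fst hcon)⟩
    · exact ⟨fun hcon => hax (congrArg Prod.fst hcon).symm, fun hcon => hxy (congrArg Prod.fst hcon)⟩
    · exact ⟨fun hcon => hay (congrArg Prod.fst hcon).symm, fun hcon => hbd (congrArg Prod.snd hcon)⟩
    · exact ⟨fun hcon => hax (congrArg Prod.fst hcon).symm, fun hcon => hxy (congrArg Prod.fst hcon)⟩
  have hss : I ⊂ T := by
    rw [Set.ssubset_iff_of_subset hIsub]
    refine ⟨(y, c), ⟨fun hcon => hay (congrArg Prod.fst hcon).symm, fun hcon => hcd (congrArg Prod.snd hcon)⟩, ?_⟩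
    intro hmem
    simp only [hI, Set.mem_insert_iff, Set.mem_singleton_iff] at hmem
    rcases hmem with hcon | hcon | hcon | hcon
    · exact hay (congrArg Prod.fst hcon).symm
    · exact hxy (congrArg Prod.fst hcon).symm
    · exact hbc (congrArg Prod.snd hcon).symm
    · exact hxy (congrArg Prod.fst hcon).symm
  intro hwed
  have hmain := hwed _ _ hminl hedsF'
  rw [star_ncard _ _ _ hadjT] at hmain
  have h2 : F'.ncard ≤ I.ncard := Set.ncard_image_le (Set.toFinite _)
  have h3 : I.ncard < T.ncard := Set.ncard_lt_ncard hss (Set.toFinite _)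
  omega

end K3K3
section Glue

lemma nonempty_isoK2 {G : SimpleGraph V} (a x : V) (hax : x ≠ a) (huniq : ∀ v, v = a ∨ v = x)
    (hadj : G.Adj a x) : Nonempty (G ≃g (⊤ : SimpleGraph (Fin 2))) := by
  classical
  refine ⟨⟨⟨fun v => if v = a then 0 else 1, fun i => if i = 0 then a else x, ?_, ?_⟩, ?_⟩⟩
  · intro v
    rcases huniq v with rfl | rfl
    · simp
    · simp [hax]
  · intro i
    fin_cases i <;> simp [hax]
  · intro u v
    simp only [Equiv.coe_fn_mk, SimpleGraph.top_adj]
    rcases huniq u with rfl | rfl <;> rcases huniq v with rfl | rfl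
    · simp
    · simp [hax, hadj]
    · simp [hax, hadj.symm]
    · simp

theorem stmt5' [Fintype V] [Fintype W] (G : SimpleGraph V) (H : SimpleGraph W)
    (hGc : G.Connected) (hHc : H.Connected)
    (hGm : matchNum G = 1) (hHm : matchNum H = 1) :
    WellEdgeDominated (strongProd G H) ↔
      Nonempty (G ≃g (⊤ : SimpleGraph (Fin 2))) ∧
      Nonempty (H ≃g (⊤ : SimpleGraph (Fin 2))) := by
  classical
  constructor
  · intro hwed
    rcases matchNum_one_structure hGc hGm with ⟨a, x0, hx0a, hGa, hGs⟩ |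
      ⟨va, vx, vy, hvax, hvay, hvxy, hGK, hVall⟩
    · rcases matchNum_one_structure hHc hHm with ⟨b, c0, hc0b, hHb, hHs⟩ |
        ⟨wb, wc, wd, hwbc, hwbd, hwcd, hHK, hWall⟩
      · -- star × star
        by_cases hGx' : ∃ x', x' ≠ a ∧ x' ≠ x0
        · obtain ⟨x', hx'a, hx'x0⟩ := hGx'
          exact absurd hwed
            (notWED_star_star a x0 x' b c0 hx0a hx'a (Ne.symm hx'x0) hGa hGs hc0b hHb hHs)
        · by_cases hHc' : ∃ c', c' ≠ b ∧ c' ≠ c0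
          · obtain ⟨c', hc'b, hc'c0⟩ := hHc'
            have hwed' := wed_of_iso (strongProd_comm_iso G H) hwed
            exact absurd hwed'
              (notWED_star_star b c0 c' a x0 hc0b hc'b (Ne.symm hc'c0) hHb hHs hx0a hGa hGs)
          · push_neg at hGx' hHc'
            constructor
            · refine nonempty_isoK2 a x0 hx0a ?_ (hGa x0 hx0a)
              intro v
              by_cases hv : v = a
              · exact Or.inl hv
              · exact Or.inr (hGx' v hv)
            · refine nonempty_isoK2 b c0 hc0b ?_ (hHb c0 hc0b)
              intro w
              by_cases hw : w = b
              · exact Or.inl hw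
              · exact Or.inr (hHc' w hw)
      · -- star × K3
        exact absurd hwed
          (notWED_star_K3 a x0 wb wc wd hx0a hGa hGs hwbc hwbd hwcd hHK hWall)
    · rcases matchNum_one_structure hHc hHm with ⟨b, c0, hc0b, hHb, hHs⟩ |
        ⟨wb, wc, wd, hwbc, hwbd, hwcd, hHK, hWall⟩
      · -- K3 × star
        have hwed' := wed_of_iso (strongProd_comm_iso G H) hwed
        exact absurd hwed'
          (notWED_star_K3 b c0 va vx vy hc0b hHb hHs hvax hvay hvxy hGK hVall)
      · -- K3 × K3
        exact absurd hwed
          (notWED_K3_K3 va vx vy wb wc wd hvax hvay hvxy hwbc hwbd hwcd hGK hVall hHK hWall)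
  · rintro ⟨⟨eG⟩, ⟨eH⟩⟩
    have hGadj : ∀ u v : V, G.Adj u v ↔ u ≠ v := by
      intro u v
      constructor
      · exact fun h => h.ne
      · intro h
        refine eG.map_rel_iff.mp ?_
        rw [SimpleGraph.top_adj]
        exact fun hc => h (eG.injective hc)
    have hHadj : ∀ u v : W, H.Adj u v ↔ u ≠ v := by
      intro u v
      constructor
      · exact fun h => h.ne
      · intro h
        refine eH.map_rel_iff.mp ?_
        rw [SimpleGraph.top_adj]
        exact fun hc => h (eH.injective hc)
    have hcardV : Fintype.card V = 2 := by
      rw [Fintype.card_congr eG.toEquiv]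
      simp
    have hcardW : Fintype.card W = 2 := by
      rw [Fintype.card_congr eH.toEquiv]
      simp
    have hcard : Fintype.card (V × W) = 4 := by
      rw [Fintype.card_prod, hcardV, hcardW]
    refine wed_K4 hcard ?_
    intro s t
    constructor
    · exact fun h => h.1
    · intro hst
      refine ⟨hst, ?_, ?_⟩
      · by_cases h1 : s.1 = t.1
        · exact Or.inl h1
        · exact Or.inr ((hGadj _ _).mpr h1)
      · by_cases h2 : s.2 = t.2
        · exact Or.inl h2
        · exact Or.inr ((hHadj _ _).mpr h2)

end Glue

theorem stmt5 [Fintype V] [Fintype W] (G : SimpleGraph V) (H : SimpleGraph W)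
    (hGc : G.Connected) (hHc : H.Connected)
    (hGm : matchNum G = 1) (hHm : matchNum H = 1) :
    WellEdgeDominated (strongProd G H) ↔
      Nonempty (G ≃g (⊤ : SimpleGraph (Fin 2))) ∧
      Nonempty (H ≃g (⊤ : SimpleGraph (Fin 2))) :=
  stmt5' G H hGc hHc hGm hHm
end

section
/- If M is a matching of a graph G and G is equimatchable, then the induced subgraph G − V(M) is equimatchable. -/
open SimpleGraph

variable {V : Type*} {W : Type*}

section Aux

variable {G : SimpleGraph V} {M : Set (Sym2 V)}

private lemma aux_not_mem {S : Set V} {e : Sym2 ↥Sᶜ} {v : V}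
    (hv : v ∈ Sym2.map Subtype.val e) : v ∉ S := by
  rw [Sym2.mem_map] at hv
  obtain ⟨w, hw, rfl⟩ := hv
  exact w.2

private lemma aux_lift_edge {S : Set V} {e : Sym2 ↥Sᶜ}
    (he : e ∈ (G.induce Sᶜ).edgeSet) : Sym2.map Subtype.val e ∈ G.edgeSet := by
  induction e with
  | _ a b =>
    rw [Sym2.map_pair_eq, SimpleGraph.mem_edgeSet]
    rw [SimpleGraph.mem_edgeSet] at he
    exact he

private lemma aux_mem_mVerts {e : Sym2 V} {v : V} (he : e ∈ M) (hv : v ∈ e) :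
    v ∈ mVerts M := ⟨e, he, hv⟩

private lemma aux_union_matching
    {N : Set (Sym2 ↥(mVerts M)ᶜ)}
    (hM : IsMatchingSet G M) (hN : IsMatchingSet (delVerts G (mVerts M)) N) :
    IsMatchingSet G (M ∪ Sym2.map Subtype.val '' N) := by
  constructor
  · rintro e (heM | ⟨e', he', rfl⟩)
    · exact hM.1 heM
    · exact aux_lift_edge (hN.1 he')
  · rintro e (heM | ⟨e', he', rfl⟩) f (hfM | ⟨f', hf', rfl⟩) hef v ⟨hve, hvf⟩
    · exact hM.2 e heM f hfM hef v ⟨hve, hvf⟩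
    · exact aux_not_mem hvf (aux_mem_mVerts heM hve)
    · exact aux_not_mem hve (aux_mem_mVerts hfM hvf)
    · have hne : e' ≠ f' := fun h => hef (by rw [h])
      rw [Sym2.mem_map] at hve hvf
      obtain ⟨w, hw, hw'⟩ := hve
      obtain ⟨w', hw2, hw2'⟩ := hvf
      have : w = w' := Subtype.val_injective (hw'.trans hw2'.symm)
      exact hN.2 e' he' f' hf' hne w ⟨hw, this ▸ hw2⟩

private lemma aux_union_maxl
    {N : Set (Sym2 ↥(mVerts M)ᶜ)}
    (hM : IsMatchingSet G M) (hN : IsMaxlMatching (delVerts G (mVerts M)) N) :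
    IsMaxlMatching G (M ∪ Sym2.map Subtype.val '' N) := by
  refine ⟨aux_union_matching hM hN.1, fun M' hsub hM' => ?_⟩
  refine Set.Subset.antisymm (fun e heM' => ?_) hsub
  by_contra heU
  -- every vertex of e avoids mVerts M
  have hvert : ∀ v ∈ e, v ∉ mVerts M := by
    intro v hv hvM
    obtain ⟨f, hfM, hvf⟩ := hvM
    have hef : e ≠ f := fun h => heU (Or.inl (h ▸ hfM))
    exact hM'.2 e heM' f (hsub (Or.inl hfM)) hef v ⟨hv, hvf⟩
  induction e with
  | _ a b =>
    have ha : a ∈ (mVerts M)ᶜ := hvert a (Sym2.mem_mk_left a b)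
    have hb : b ∈ (mVerts M)ᶜ := hvert b (Sym2.mem_mk_right a b)
    set e' : Sym2 ↥(mVerts M)ᶜ := s(⟨a, ha⟩, ⟨b, hb⟩) with he'
    have hmap : Sym2.map Subtype.val e' = s(a, b) := by
      rw [he', Sym2.map_pair_eq]
    have he'N : e' ∉ N := fun h => heU (Or.inr ⟨e', h, hmap⟩)
    have hmatch : IsMatchingSet (delVerts G (mVerts M)) (N ∪ {e'}) := by
      constructor
      · rintro f (hf | hf)
        · exact hN.1.1 hf
        · rw [Set.mem_singleton_iff] at hf
          subst hf
          rw [he', SimpleGraph.mem_edgeSet]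
          exact (hM'.1 heM' : G.Adj a b)
      · rintro f (hf | hf) g (hg | hg) hfg v ⟨hvf, hvg⟩
        · exact hN.1.2 f hf g hg hfg v ⟨hvf, hvg⟩
        · rw [Set.mem_singleton_iff] at hg; subst hg
          have h1 : (v : V) ∈ Sym2.map Subtype.val f := (Sym2.mem_map).2 ⟨v, hvf, rfl⟩
          have h2 : (v : V) ∈ s(a, b) := hmap ▸ (Sym2.mem_map).2 ⟨v, hvg, rfl⟩
          have hne : s(a, b) ≠ Sym2.map Subtype.val f := by
            intro h
            exact heU (Or.inr ⟨f, hf, h.symm⟩)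
          exact hM'.2 s(a,b) heM' (Sym2.map Subtype.val f)
            (hsub (Or.inr ⟨f, hf, rfl⟩)) hne v ⟨h2, h1⟩
        · rw [Set.mem_singleton_iff] at hf; subst hf
          have h1 : (v : V) ∈ Sym2.map Subtype.val g := (Sym2.mem_map).2 ⟨v, hvg, rfl⟩
          have h2 : (v : V) ∈ s(a, b) := hmap ▸ (Sym2.mem_map).2 ⟨v, hvf, rfl⟩
          have hne : s(a, b) ≠ Sym2.map Subtype.val g := by
            intro h
            exact heU (Or.inr ⟨g, hg, h.symm⟩)
          exact hM'.2 s(a,b) heM' (Sym2.map Subtype.val g)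
            (hsub (Or.inr ⟨g, hg, rfl⟩)) hne v ⟨h2, h1⟩
        · rw [Set.mem_singleton_iff] at hf hg
          exact hfg (hf.trans hg.symm)
    have := hN.2 (N ∪ {e'}) Set.subset_union_left hmatch
    exact he'N (this ▸ (Or.inr rfl : e' ∈ N ∪ {e'}))

private lemma aux_disjoint
    {N : Set (Sym2 ↥(mVerts M)ᶜ)} :
    Disjoint M (Sym2.map Subtype.val '' N) := by
  rw [Set.disjoint_left]
  rintro e heM ⟨e', _, rfl⟩
  induction e' with
  | _ a b =>
    rw [Sym2.map_pair_eq] at heM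
    exact a.2 (aux_mem_mVerts heM (Sym2.mem_mk_left _ _))

end Aux

theorem stmt8 (G : SimpleGraph V) (M : Set (Sym2 V)) (hM : IsMatchingSet G M)
    (hG : Equimatchable G) :
    Equimatchable (delVerts G (mVerts M)) := by
  intro N N' hNmaxl hN'
  have hinj : Function.Injective (Sym2.map (Subtype.val : ↥(mVerts M)ᶜ → V)) :=
    Sym2.map.injective Subtype.val_injective
  have hmaxl := aux_union_maxl hM hNmaxl
  have hmatch' := aux_union_matching hM hN'
  have hle := hG _ _ hmaxl hmatch'
  by_cases hfin : (M ∪ Sym2.map Subtype.val '' N).Finite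
  · have hMfin : M.Finite := hfin.subset Set.subset_union_left
    have hNfin : (Sym2.map Subtype.val '' N).Finite := hfin.subset Set.subset_union_right
    by_cases hN'fin : N'.Finite
    · have h1 : (M ∪ Sym2.map Subtype.val '' N).ncard = M.ncard + N.ncard := by
        rw [Set.ncard_union_eq aux_disjoint hMfin hNfin,
          Set.ncard_image_of_injective _ hinj]
      have h2 : (M ∪ Sym2.map Subtype.val '' N').ncard = M.ncard + N'.ncard := by
        rw [Set.ncard_union_eq aux_disjoint hMfin (hN'fin.image _),
          Set.ncard_image_of_injective _ hinj]
      rw [h1, h2] at hle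
      omega
    · rw [Set.Infinite.ncard hN'fin]
      exact Nat.zero_le _
  · have h0 : (M ∪ Sym2.map Subtype.val '' N).ncard = 0 := Set.Infinite.ncard hfin
    have hNe : N' = ∅ := by
      by_contra hne
      obtain ⟨e, he⟩ := Set.nonempty_iff_ne_empty.2 hne
      have hsingle : IsMatchingSet G {Sym2.map Subtype.val e} := by
        constructor
        · rintro f hf
          rw [Set.mem_singleton_iff] at hf
          subst hf
          exact aux_lift_edge (hN'.1 he)
        · rintro f hf g hg hfg v _
          rw [Set.mem_singleton_iff] at hf hg
          exact hfg (hf.trans hg.symm)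
      have h1 := hG _ _ hmaxl hsingle
      rw [h0, Set.ncard_singleton] at h1
      omega
    simp [hNe]
end

section
/- The strong product of two nontrivial connected graphs is 2-connected. -/
open SimpleGraph

variable {V : Type*} {W : Type*}

theorem stmt9 [Fintype V] [Fintype W] (G : SimpleGraph V) (H : SimpleGraph W)
    (hGn : 2 ≤ Fintype.card V) (hHn : 2 ≤ Fintype.card W)
    (hGc : G.Connected) (hHc : H.Connected) :
    TwoConnected (strongProd G H) := by
  have adjL : ∀ {u u' : V} (w : W), G.Adj u u' → (strongProd G H).Adj (u, w) (u', w) := by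
    intro u u' w h
    exact ⟨fun he => h.ne (congrArg Prod.fst he), Or.inr h, Or.inl rfl⟩
  have adjR : ∀ (u : V) {w w' : W}, H.Adj w w' → (strongProd G H).Adj (u, w) (u, w') := by
    intro u w w' h
    exact ⟨fun he => h.ne (congrArg Prod.snd he), Or.inl rfl, Or.inr h⟩
  refine ⟨?_, ?_, ?_⟩
  · rw [Fintype.card_prod]
    calc 3 ≤ 2 * 2 := by norm_num
    _ ≤ Fintype.card V * Fintype.card W := Nat.mul_le_mul hGn hHn
  · have : Nonempty (V × W) := ⟨(hGc.nonempty.some, hHc.nonempty.some)⟩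
    refine ⟨fun x y => ?_⟩
    have h1 : (strongProd G H).Reachable (x.1, x.2) (y.1, x.2) :=
      (hGc.preconnected x.1 y.1).map ⟨fun u => (u, x.2), fun h => adjL _ h⟩
    have h2 : (strongProd G H).Reachable (y.1, x.2) (y.1, y.2) :=
      (hHc.preconnected x.2 y.2).map ⟨fun w => (y.1, w), fun h => adjR _ h⟩
    exact h1.trans h2
  · rintro ⟨a, b⟩
    set D := delVerts (strongProd G H) {(a, b)} with hD
    -- row hom at level w ≠ b
    have rowReach : ∀ {w : W} (hw : w ≠ b), ∀ u u' : V,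
        D.Reachable ⟨(u, w), by simp [Prod.ext_iff, hw]⟩ ⟨(u', w), by simp [Prod.ext_iff, hw]⟩ := by
      intro w hw u u'
      exact (hGc.preconnected u u').map
        ((⟨fun v => ⟨(v, w), by simp [Prod.ext_iff, hw]⟩, fun h => adjL _ h⟩ : G →g D))
    have colReach : ∀ {u : V} (hu : u ≠ a), ∀ w w' : W,
        D.Reachable ⟨(u, w), by simp [Prod.ext_iff, hu]⟩ ⟨(u, w'), by simp [Prod.ext_iff, hu]⟩ := by
      intro u hu w w'
      exact (hHc.preconnected w w').map
        ((⟨fun v => ⟨(u, v), by simp [Prod.ext_iff, hu]⟩, fun h => adjR _ h⟩ : H →g D))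
    obtain ⟨u0, hu0⟩ := Fintype.exists_ne_of_one_lt_card (by omega) a
    obtain ⟨w0, hw0⟩ := Fintype.exists_ne_of_one_lt_card (by omega) b
    have key : ∀ x : ↥({(a, b)}ᶜ : Set (V × W)),
        D.Reachable x ⟨(u0, w0), by simp [Prod.ext_iff, hu0]⟩ := by
      rintro ⟨⟨x1, x2⟩, hx⟩
      simp only [Set.mem_compl_iff, Set.mem_singleton_iff, Prod.mk.injEq, not_and] at hx
      by_cases hx2 : x2 = b
      · have hx1 : x1 ≠ a := fun h => hx h hx2
        have r1 := colReach hx1 x2 w0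
        have r2 := rowReach hw0 x1 u0
        exact r1.trans r2
      · have r1 := rowReach hx2 x1 u0
        have r2 := colReach hu0 x2 w0
        exact r1.trans r2
    have : Nonempty ↥({(a, b)}ᶜ : Set (V × W)) := ⟨⟨(u0, b), by simp [Prod.ext_iff, hu0]⟩⟩
    exact ⟨fun x y => (key x).trans (key y).symm⟩
end

section
/- Let G be an odd-order nontrivial connected graph. The strong product G ⊠ P_3 is equimatchable if and only if G is a complete graph. -/
open SimpleGraph

variable {V : Type*} {W : Type*}

namespace Stmt12Aux

variable {X : Type*}

lemma mem_mVerts_of {M : Set (Sym2 X)} {e : Sym2 X} {v : X} (he : e ∈ M) (hv : v ∈ e) :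
    v ∈ mVerts M := ⟨e, he, hv⟩

lemma matchingSet_subset {G : SimpleGraph X} {M N : Set (Sym2 X)}
    (h : IsMatchingSet G N) (hs : M ⊆ N) : IsMatchingSet G M :=
  ⟨fun e he => h.1 (hs he), fun e he f hf => h.2 e (hs he) f (hs hf)⟩

lemma edge_repr {G : SimpleGraph X} {e : Sym2 X} (he : e ∈ G.edgeSet) :
    ∃ x y, G.Adj x y ∧ e = s(x, y) := by
  induction e using Sym2.ind with
  | _ x y => exact ⟨x, y, he, rfl⟩

lemma eq_of_shared {G : SimpleGraph X} {M : Set (Sym2 X)} (hM : IsMatchingSet G M)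
    {e f : Sym2 X} (he : e ∈ M) (hf : f ∈ M) {v : X} (hv : v ∈ e) (hv' : v ∈ f) : e = f := by
  by_contra hne
  exact hM.2 e he f hf hne v ⟨hv, hv'⟩

lemma partner {G : SimpleGraph X} {M : Set (Sym2 X)} (hM : IsMatchingSet G M) {x : X}
    (hx : x ∈ mVerts M) : ∃ y, G.Adj x y ∧ s(x, y) ∈ M := by
  obtain ⟨e, he, hxe⟩ := hx
  obtain ⟨a, b, hab, rfl⟩ := edge_repr (hM.1 he)
  rcases Sym2.mem_iff.1 hxe with rfl | rfl
  · exact ⟨b, hab, he⟩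
  · exact ⟨a, hab.symm, by rwa [Sym2.eq_swap]⟩

/-- counting lemma -/
lemma ncard_mVerts [Finite X] {G : SimpleGraph X} :
    ∀ M : Set (Sym2 X), IsMatchingSet G M → (mVerts M).ncard = 2 * M.ncard := by
  intro M
  refine Set.Finite.induction_on
    (motive := fun M _ => IsMatchingSet G M → (mVerts M).ncard = 2 * M.ncard)
    M (Set.toFinite M) ?_ ?_
  · intro _
    have : mVerts (∅ : Set (Sym2 X)) = ∅ := by
      ext v; simp [mVerts]
    simp [this]
  · intro e M heM hMfin ih hmatch
    have hM : IsMatchingSet G M := matchingSet_subset hmatch (Set.subset_insert _ _)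
    obtain ⟨x, y, hxy, rfl⟩ := edge_repr (hmatch.1 (Set.mem_insert _ _))
    have hxM : x ∉ mVerts M := by
      rintro ⟨f, hf, hxf⟩
      exact hmatch.2 _ (Set.mem_insert _ _) f (Set.mem_insert_of_mem _ hf)
        (fun h => heM (h ▸ hf)) x ⟨by simp, hxf⟩
    have hyM : y ∉ mVerts M := by
      rintro ⟨f, hf, hyf⟩
      exact hmatch.2 _ (Set.mem_insert _ _) f (Set.mem_insert_of_mem _ hf)
        (fun h => heM (h ▸ hf)) y ⟨by simp, hyf⟩
    have hset : mVerts (insert s(x,y) M) = insert x (insert y (mVerts M)) := by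
      ext v
      constructor
      · rintro ⟨f, hf, hvf⟩
        rcases Set.mem_insert_iff.1 hf with rfl | hf
        · rcases Sym2.mem_iff.1 hvf with rfl | rfl
          · exact Set.mem_insert _ _
          · exact Set.mem_insert_of_mem _ (Set.mem_insert _ _)
        · exact Set.mem_insert_of_mem _ (Set.mem_insert_of_mem _ ⟨f, hf, hvf⟩)
      · rintro (rfl | rfl | ⟨f, hf, hvf⟩)
        · exact ⟨s(v,y), Set.mem_insert _ _, by simp⟩
        · exact ⟨s(x,v), Set.mem_insert _ _, by simp⟩
        · exact ⟨f, Set.mem_insert_of_mem _ hf, hvf⟩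
    rw [hset, Set.ncard_insert_of_notMem (by
        simp only [Set.mem_insert_iff]
        push_neg
        exact ⟨hxy.ne, hxM⟩),
      Set.ncard_insert_of_notMem hyM, Set.ncard_insert_of_notMem heM, ih hM]
    ring

/-- matchings avoiding a vertex set -/
def AvoidMatching (G : SimpleGraph X) (F : Set X) (M : Set (Sym2 X)) : Prop :=
  IsMatchingSet G M ∧ ∀ e ∈ M, ∀ v ∈ e, v ∉ F

def AvoidMaximal (G : SimpleGraph X) (F : Set X) (M : Set (Sym2 X)) : Prop :=
  AvoidMatching G F M ∧
    ∀ x y, G.Adj x y → x ∉ F → y ∉ F → x ∉ mVerts M → y ∉ mVerts M → False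

lemma mVerts_disjoint_of_avoid {G : SimpleGraph X} {F : Set X} {M : Set (Sym2 X)}
    (h : AvoidMatching G F M) : ∀ v ∈ mVerts M, v ∉ F := by
  rintro v ⟨e, he, hve⟩
  exact h.2 e he v hve

lemma exists_avoidMaximal_ge [Finite X] {G : SimpleGraph X} {F : Set X} {M0 : Set (Sym2 X)}
    (h0 : AvoidMatching G F M0) : ∃ M, M0 ⊆ M ∧ AvoidMaximal G F M := by
  classical
  set S : Set (Set (Sym2 X)) := {M | AvoidMatching G F M ∧ M0 ⊆ M} with hS
  have hfin : S.Finite := Set.toFinite S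
  have hne : S.Nonempty := ⟨M0, h0, le_refl _⟩
  obtain ⟨M, hMS, hmax'⟩ := hfin.exists_maximalFor id S hne
  have hmax : ∀ a' ∈ S, id M ≤ id a' → id M = id a' :=
    fun a' ha' h => le_antisymm h (hmax' ha' h)
  refine ⟨M, hMS.2, hMS.1, ?_⟩
  intro x y hadj hxF hyF hxM hyM
  have hins : insert s(x,y) M ∈ S := by
    refine ⟨⟨⟨?_, ?_⟩, ?_⟩, hMS.2.trans (Set.subset_insert _ _)⟩
    · rintro e (rfl | he)
      · exact (G.mem_edgeSet).2 hadj
      · exact hMS.1.1.1 he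
    · rintro e (rfl | he) f (rfl | hf) hne v ⟨hve, hvf⟩
      · exact hne rfl
      · rcases Sym2.mem_iff.1 hve with rfl | rfl
        · exact hxM ⟨f, hf, hvf⟩
        · exact hyM ⟨f, hf, hvf⟩
      · rcases Sym2.mem_iff.1 hvf with rfl | rfl
        · exact hxM ⟨e, he, hve⟩
        · exact hyM ⟨e, he, hve⟩
      · exact hMS.1.1.2 e he f hf hne v ⟨hve, hvf⟩
    · rintro e (rfl | he) v hv
      · rcases Sym2.mem_iff.1 hv with rfl | rfl
        · exact hxF
        · exact hyF
      · exact hMS.1.2 e he v hv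
  have := hmax _ hins (Set.subset_insert _ _)
  simp only [id] at this
  exact hxM ⟨s(x,y), this ▸ Set.mem_insert _ _, by simp⟩

lemma avoid_ncard_le [Finite X] {G : SimpleGraph X} {F : Set X} {N : Set (Sym2 X)}
    (hN : AvoidMatching G F N) : ∃ M, AvoidMaximal G F M ∧ N.ncard ≤ M.ncard := by
  obtain ⟨M, hsub, hM⟩ := exists_avoidMaximal_ge hN
  exact ⟨M, hM, Set.ncard_le_ncard hsub (Set.toFinite M)⟩

end Stmt12Aux
namespace Stmt12Aux
section Product

variable {V : Type*} {G : SimpleGraph V}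

lemma strongProd_adj {W : Type*} {H : SimpleGraph W} {x y : V × W} :
    (strongProd G H).Adj x y ↔
      x ≠ y ∧ (x.1 = y.1 ∨ G.Adj x.1 y.1) ∧ (x.2 = y.2 ∨ H.Adj x.2 y.2) := Iff.rfl

lemma p3_adj01 : (pathGraph 3).Adj 0 1 := by rw [pathGraph_adj]; decide
lemma p3_adj12 : (pathGraph 3).Adj 1 2 := by rw [pathGraph_adj]; decide
lemma p3_not_adj02 : ¬ (pathGraph 3).Adj 0 2 := by rw [pathGraph_adj]; decide
lemma fin3_cases (j : Fin 3) : j = 0 ∨ j = 1 ∨ j = 2 := by revert j; decide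

def liftK (j : Fin 3) (K : Set (Sym2 V)) : Set (Sym2 (V × Fin 3)) :=
  (Sym2.map fun x => (x, j)) '' K

def vert12 (U : Set V) : Set (Sym2 (V × Fin 3)) :=
  (fun z => s((z, (1 : Fin 3)), (z, (2 : Fin 3)))) '' U

def vert01 (Ws : Set V) : Set (Sym2 (V × Fin 3)) :=
  (fun w => s((w, (0 : Fin 3)), (w, (1 : Fin 3)))) '' Ws

def prodM (K : Set (Sym2 V)) (Ws : Set V) : Set (Sym2 (V × Fin 3)) :=
  (liftK 0 K ∪ liftK 1 K ∪ liftK 2 K) ∪ vert12 (Ws ∪ mVerts K)ᶜ ∪ vert01 Ws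

lemma shape_lift {j : Fin 3} {K : Set (Sym2 V)} {e : Sym2 (V × Fin 3)} {v : V × Fin 3}
    (he : e ∈ liftK j K) (hv : v ∈ e) : v.2 = j ∧ ∃ f ∈ K, v.1 ∈ f := by
  obtain ⟨f, hf, rfl⟩ := he
  obtain ⟨a, ha, rfl⟩ := Sym2.mem_map.1 hv
  exact ⟨rfl, f, hf, ha⟩

lemma mem_prodM_elim {K : Set (Sym2 V)} {Ws : Set V} {e : Sym2 (V × Fin 3)}
    (he : e ∈ prodM K Ws) :
    (∃ j : Fin 3, e ∈ liftK j K) ∨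
      (∃ z ∈ (Ws ∪ mVerts K)ᶜ, e = s((z, (1:Fin 3)), (z, (2:Fin 3)))) ∨
      (∃ w ∈ Ws, e = s((w, (0:Fin 3)), (w, (1:Fin 3)))) := by
  rcases he with (((h | h) | h) | h) | h
  · exact Or.inl ⟨0, h⟩
  · exact Or.inl ⟨1, h⟩
  · exact Or.inl ⟨2, h⟩
  · obtain ⟨z, hz, rfl⟩ := h
    exact Or.inr (Or.inl ⟨z, hz, rfl⟩)
  · obtain ⟨w, hw, rfl⟩ := h
    exact Or.inr (Or.inr ⟨w, hw, rfl⟩)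

lemma prodM_isMatching {K : Set (Sym2 V)} {Ws : Set V} (hK : AvoidMatching G Ws K) :
    IsMatchingSet (strongProd G (pathGraph 3)) (prodM K Ws) := by
  constructor
  · intro e he
    rcases mem_prodM_elim he with ⟨j, f, hf, rfl⟩ | ⟨z, _, rfl⟩ | ⟨w, _, rfl⟩
    · obtain ⟨x, y, hxy, rfl⟩ := edge_repr (hK.1.1 hf)
      rw [Sym2.map_pair_eq, SimpleGraph.mem_edgeSet, strongProd_adj]
      exact ⟨fun h => hxy.ne (congrArg Prod.fst h), Or.inr hxy, Or.inl rfl⟩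
    · rw [SimpleGraph.mem_edgeSet, strongProd_adj]
      exact ⟨fun h => by simpa using congrArg Prod.snd h, Or.inl rfl, Or.inr p3_adj12⟩
    · rw [SimpleGraph.mem_edgeSet, strongProd_adj]
      exact ⟨fun h => by simpa using congrArg Prod.snd h, Or.inl rfl, Or.inr p3_adj01⟩
  · intro e he f hf hne v ⟨hve, hvf⟩
    have hUW : ∀ z : V, z ∈ (Ws ∪ mVerts K)ᶜ → ∀ g ∈ K, v.1 ∈ g → z = v.1 → False := by
      rintro z hz g hg hvg rfl
      exact hz (Or.inr ⟨g, hg, hvg⟩)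
    rcases mem_prodM_elim he with ⟨j, hej⟩ | ⟨z, hz, rfl⟩ | ⟨w, hw, rfl⟩ <;>
      rcases mem_prodM_elim hf with ⟨k, hfk⟩ | ⟨z', hz', rfl⟩ | ⟨w', hw', rfl⟩
    · -- lift lift
      obtain ⟨g, hg, rfl⟩ := hej
      obtain ⟨g', hg', rfl⟩ := hfk
      obtain ⟨a, ha, rfl⟩ := Sym2.mem_map.1 hve
      obtain ⟨a', ha', haa⟩ := Sym2.mem_map.1 hvf
      have hjk : k = j := congrArg Prod.snd haa
      have ha1 : a' = a := congrArg Prod.fst haa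
      subst hjk; subst ha1
      have hgg : g = g' := eq_of_shared hK.1 hg hg' ha ha'
      exact hne (by rw [hgg])
    · obtain ⟨hj, g, hg, hvg⟩ := shape_lift hej hve
      rcases Sym2.mem_iff.1 hvf with rfl | rfl <;>
        exact hUW _ hz' g hg hvg rfl
    · obtain ⟨hj, g, hg, hvg⟩ := shape_lift hej hve
      rcases Sym2.mem_iff.1 hvf with rfl | rfl <;>
        exact hK.2 g hg _ hvg hw'
    · obtain ⟨hj, g, hg, hvg⟩ := shape_lift hfk hvf
      rcases Sym2.mem_iff.1 hve with rfl | rfl <;>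
        exact hUW _ hz g hg hvg rfl
    · -- vert12 vert12
      have : z = z' := by
        rcases Sym2.mem_iff.1 hve with rfl | rfl <;>
          rcases Sym2.mem_iff.1 hvf with h | h <;>
            first
              | exact (congrArg Prod.fst h)
              | exact (congrArg Prod.fst h)
      exact hne (by rw [this])
    · -- vert12 vert01 : shared vertex has fst in U and in Ws
      have h1 : v.1 = z := by
        rcases Sym2.mem_iff.1 hve with rfl | rfl <;> rfl
      have h2 : v.1 = w' := by
        rcases Sym2.mem_iff.1 hvf with rfl | rfl <;> rfl
      exact hz (Or.inl (h1 ▸ h2 ▸ hw'))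
    · obtain ⟨hj, g, hg, hvg⟩ := shape_lift hfk hvf
      rcases Sym2.mem_iff.1 hve with rfl | rfl <;>
        exact hK.2 g hg _ hvg hw
    · have h1 : v.1 = z' := by
        rcases Sym2.mem_iff.1 hvf with rfl | rfl <;> rfl
      have h2 : v.1 = w := by
        rcases Sym2.mem_iff.1 hve with rfl | rfl <;> rfl
      exact hz' (Or.inl (h1 ▸ h2 ▸ hw))
    · have : w = w' := by
        rcases Sym2.mem_iff.1 hve with rfl | rfl <;>
          rcases Sym2.mem_iff.1 hvf with h | h <;>
            exact (congrArg Prod.fst h)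
      exact hne (by rw [this])

end Product
end Stmt12Aux
namespace Stmt12Aux
section Product2

variable {V : Type*} {G : SimpleGraph V}

lemma prodM_cover {K : Set (Sym2 V)} {Ws : Set V} {p : V × Fin 3}
    (hp : p ∉ mVerts (prodM K Ws)) :
    (p.2 = 0 ∧ p.1 ∈ (Ws ∪ mVerts K)ᶜ) ∨ (p.2 = 2 ∧ p.1 ∈ Ws) := by
  obtain ⟨x, j⟩ := p
  have hlift : x ∈ mVerts K → False := by
    rintro ⟨f, hf, hxf⟩
    refine hp ⟨Sym2.map (fun z => (z, j)) f, ?_, Sym2.mem_map.2 ⟨x, hxf, rfl⟩⟩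
    rcases fin3_cases j with rfl | rfl | rfl
    · exact Or.inl (Or.inl (Or.inl (Or.inl ⟨f, hf, rfl⟩)))
    · exact Or.inl (Or.inl (Or.inl (Or.inr ⟨f, hf, rfl⟩)))
    · exact Or.inl (Or.inl (Or.inr ⟨f, hf, rfl⟩))
  by_cases hW : x ∈ Ws
  · rcases fin3_cases j with rfl | rfl | rfl
    · exact absurd ⟨_, Or.inr ⟨x, hW, rfl⟩, by simp⟩ hp
    · exact absurd ⟨_, Or.inr ⟨x, hW, rfl⟩, by simp⟩ hp
    · exact Or.inr ⟨rfl, hW⟩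
  · have hU : x ∈ (Ws ∪ mVerts K)ᶜ := by
      intro h; rcases h with h | h
      · exact hW h
      · exact hlift h
    rcases fin3_cases j with rfl | rfl | rfl
    · exact Or.inl ⟨rfl, hU⟩
    · exact absurd ⟨_, Or.inl (Or.inr ⟨x, hU, rfl⟩), by simp⟩ hp
    · exact absurd ⟨_, Or.inl (Or.inr ⟨x, hU, rfl⟩), by simp⟩ hp

lemma prodM_isMaxl {K : Set (Sym2 V)} {Ws : Set V} (hK : AvoidMaximal G Ws K)
    (hWs : Ws.Pairwise fun a b => ¬ G.Adj a b) :
    IsMaxlMatching (strongProd G (pathGraph 3)) (prodM K Ws) := by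
  refine ⟨prodM_isMatching hK.1, ?_⟩
  intro M' hsub hM'
  refine Set.Subset.antisymm ?_ hsub
  intro e heM'
  by_contra heM
  obtain ⟨p, q, hpq, rfl⟩ := edge_repr (hM'.1 heM')
  have hfree : ∀ v : V × Fin 3, v ∈ s(p, q) → v ∉ mVerts (prodM K Ws) := by
    rintro v hv ⟨f, hf, hvf⟩
    exact hM'.2 _ heM' f (hsub hf) (fun h => heM (h ▸ hf)) v ⟨hv, hvf⟩
  obtain ⟨hne, h1, h2⟩ := (strongProd_adj).1 hpq
  rcases prodM_cover (hfree p (by simp)) with ⟨hp2, hpU⟩ | ⟨hp2, hpW⟩ <;>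
    rcases prodM_cover (hfree q (by simp)) with ⟨hq2, hqU⟩ | ⟨hq2, hqW⟩
  · -- both coord 0, both exposed in U : contradicts AvoidMaximal
    rcases h1 with h1 | h1
    · exact hne (Prod.ext h1 (hp2.trans hq2.symm))
    · refine hK.2 p.1 q.1 h1 (fun h => hpU (Or.inl h)) (fun h => hqU (Or.inl h))
        (fun h => hpU (Or.inr h)) (fun h => hqU (Or.inr h))
  · -- coords 0 and 2 : not adjacent in pathGraph
    rcases h2 with h2 | h2
    · rw [hp2, hq2] at h2; exact absurd h2 (by decide)
    · rw [hp2, hq2] at h2; exact p3_not_adj02 h2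
  · rcases h2 with h2 | h2
    · rw [hp2, hq2] at h2; exact absurd h2 (by decide)
    · rw [hp2, hq2] at h2; exact p3_not_adj02 h2.symm
  · -- both coord 2, both in Ws : Ws independent
    rcases h1 with h1 | h1
    · exact hne (Prod.ext h1 (hp2.trans hq2.symm))
    · exact hWs hpW hqW h1.ne h1

end Product2
end Stmt12Aux
namespace Stmt12Aux
section Product3

variable {V : Type*} {G : SimpleGraph V}

lemma ncard_liftK [Finite V] (j : Fin 3) (K : Set (Sym2 V)) : (liftK j K).ncard = K.ncard :=
  Set.ncard_image_of_injective _ (Sym2.map.injective fun a b h => (Prod.ext_iff.1 h).1)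

lemma ncard_vert12 [Finite V] (U : Set V) : (vert12 U).ncard = U.ncard := by
  apply Set.ncard_image_of_injective
  intro a b h
  rcases Sym2.eq_iff.1 h with ⟨h1, _⟩ | ⟨h1, _⟩
  · exact congrArg Prod.fst h1
  · have h2 := congrArg Prod.snd h1; simp at h2

lemma ncard_vert01 [Finite V] (Ws : Set V) : (vert01 Ws).ncard = Ws.ncard := by
  apply Set.ncard_image_of_injective
  intro a b h
  rcases Sym2.eq_iff.1 h with ⟨h1, _⟩ | ⟨h1, _⟩
  · exact congrArg Prod.fst h1
  · have h2 := congrArg Prod.snd h1; simp at h2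

lemma liftK_snd {j : Fin 3} {K : Set (Sym2 V)} {e : Sym2 (V × Fin 3)} {v : V × Fin 3}
    (he : e ∈ liftK j K) (hv : v ∈ e) : v.2 = j := (shape_lift he hv).1

lemma disj_liftK {j k : Fin 3} (hjk : j ≠ k) (K : Set (Sym2 V)) :
    Disjoint (liftK j K) (liftK k K) := by
  rw [Set.disjoint_left]
  intro e hej hek
  exact hjk ((liftK_snd hej e.out_fst_mem).symm.trans (liftK_snd hek e.out_fst_mem))

lemma disj_liftK_vert12 {j : Fin 3} {K : Set (Sym2 V)} {U : Set V} :
    Disjoint (liftK j K) (vert12 U) := by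
  rw [Set.disjoint_left]
  rintro e hej ⟨z, hz, rfl⟩
  have h1 := liftK_snd hej (Sym2.mem_mk_left _ _)
  have h2 := liftK_snd hej (Sym2.mem_mk_right _ _)
  rw [← h2] at h1
  simp at h1

lemma disj_liftK_vert01 {j : Fin 3} {K : Set (Sym2 V)} {Ws : Set V} :
    Disjoint (liftK j K) (vert01 Ws) := by
  rw [Set.disjoint_left]
  rintro e hej ⟨z, hz, rfl⟩
  have h1 := liftK_snd hej (Sym2.mem_mk_left _ _)
  have h2 := liftK_snd hej (Sym2.mem_mk_right _ _)
  rw [← h2] at h1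
  simp at h1

lemma disj_vert12_vert01 {U Ws : Set V} : Disjoint (vert12 U) (vert01 Ws) := by
  rw [Set.disjoint_left]
  rintro e ⟨z, hz, rfl⟩ ⟨w, hw, he⟩
  rcases Sym2.eq_iff.1 he with ⟨h1, _⟩ | ⟨h1, _⟩
  · have h2 := congrArg Prod.snd h1; simp at h2
  · have h2 := congrArg Prod.snd h1; simp at h2

lemma prodM_ncard [Fintype V] {K : Set (Sym2 V)} {Ws : Set V} (hK : AvoidMatching G Ws K) :
    (prodM K Ws).ncard = Fintype.card V + K.ncard := by
  classical
  have hdisjWm : Disjoint Ws (mVerts K) :=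
    Set.disjoint_right.2 fun v hv => mVerts_disjoint_of_avoid hK v hv
  have h1 : (Ws ∪ mVerts K).ncard = Ws.ncard + 2 * K.ncard := by
    rw [Set.ncard_union_eq hdisjWm (Set.toFinite _) (Set.toFinite _), ncard_mVerts _ hK.1]
  have h2 : (Ws ∪ mVerts K).ncard + ((Ws ∪ mVerts K)ᶜ).ncard = Fintype.card V := by
    rw [Set.ncard_add_ncard_compl, Nat.card_eq_fintype_card]
  have e1 : (liftK 0 K ∪ liftK 1 K).ncard = K.ncard + K.ncard := by
    rw [Set.ncard_union_eq (disj_liftK (by decide) K) (Set.toFinite _) (Set.toFinite _),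
      ncard_liftK, ncard_liftK]
  have e2 : (liftK 0 K ∪ liftK 1 K ∪ liftK 2 K).ncard = K.ncard + K.ncard + K.ncard := by
    rw [Set.ncard_union_eq (Set.disjoint_union_left.2
        ⟨disj_liftK (by decide) K, disj_liftK (by decide) K⟩) (Set.toFinite _) (Set.toFinite _),
      e1, ncard_liftK]
  have e3 : (liftK 0 K ∪ liftK 1 K ∪ liftK 2 K ∪ vert12 (Ws ∪ mVerts K)ᶜ).ncard
      = K.ncard + K.ncard + K.ncard + ((Ws ∪ mVerts K)ᶜ).ncard := by
    rw [Set.ncard_union_eq (Set.disjoint_union_left.2 ⟨Set.disjoint_union_left.2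
        ⟨disj_liftK_vert12, disj_liftK_vert12⟩, disj_liftK_vert12⟩)
      (Set.toFinite _) (Set.toFinite _), e2, ncard_vert12]
  have e4 : (prodM K Ws).ncard = K.ncard + K.ncard + K.ncard
      + ((Ws ∪ mVerts K)ᶜ).ncard + Ws.ncard := by
    rw [prodM, Set.ncard_union_eq (Set.disjoint_union_left.2 ⟨Set.disjoint_union_left.2
        ⟨Set.disjoint_union_left.2 ⟨disj_liftK_vert01, disj_liftK_vert01⟩, disj_liftK_vert01⟩,
        disj_vert12_vert01⟩) (Set.toFinite _) (Set.toFinite _), e3, ncard_vert01]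
  omega

lemma key_eq [Fintype V] (heq : Equimatchable (strongProd G (pathGraph 3)))
    {K K' : Set (Sym2 V)} {Ws Ws' : Set V}
    (hWs : Ws.Pairwise fun a b => ¬ G.Adj a b) (hWs' : Ws'.Pairwise fun a b => ¬ G.Adj a b)
    (hK : AvoidMaximal G Ws K) (hK' : AvoidMaximal G Ws' K') : K.ncard = K'.ncard := by
  have a1 := heq _ _ (prodM_isMaxl hK hWs) (prodM_isMatching hK'.1)
  have a2 := heq _ _ (prodM_isMaxl hK' hWs') (prodM_isMatching hK.1)
  rw [prodM_ncard hK.1, prodM_ncard hK'.1] at a1 a2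
  omega

end Product3
end Stmt12Aux
namespace Stmt12Aux
section Forward

variable {X : Type*}

lemma mVerts_insert {e : Sym2 X} {M : Set (Sym2 X)} {v : X} :
    v ∈ mVerts (insert e M) ↔ v ∈ e ∨ v ∈ mVerts M := by
  constructor
  · rintro ⟨f, hf, hvf⟩
    rcases Set.mem_insert_iff.1 hf with rfl | hf
    · exact Or.inl hvf
    · exact Or.inr ⟨f, hf, hvf⟩
  · rintro (hv | ⟨f, hf, hvf⟩)
    · exact ⟨e, Set.mem_insert _ _, hv⟩
    · exact ⟨f, Set.mem_insert_of_mem _ hf, hvf⟩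

lemma mVerts_mono {M N : Set (Sym2 X)} (h : M ⊆ N) : mVerts M ⊆ mVerts N := by
  rintro v ⟨e, he, hve⟩; exact ⟨e, h he, hve⟩

lemma not_mem_of_fst_free {M : Set (Sym2 X)} {x y : X} (hx : x ∉ mVerts M) : s(x,y) ∉ M :=
  fun h => hx ⟨_, h, by simp⟩

lemma matching_insert {G : SimpleGraph X} {M : Set (Sym2 X)} (hM : IsMatchingSet G M)
    {x y : X} (hxy : G.Adj x y) (hx : x ∉ mVerts M) (hy : y ∉ mVerts M) :
    IsMatchingSet G (insert s(x,y) M) := by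
  constructor
  · rintro e (rfl | he)
    · exact (G.mem_edgeSet).2 hxy
    · exact hM.1 he
  · rintro e (rfl | he) f (rfl | hf) hne v ⟨hve, hvf⟩
    · exact hne rfl
    · rcases Sym2.mem_iff.1 hve with rfl | rfl
      · exact hx ⟨f, hf, hvf⟩
      · exact hy ⟨f, hf, hvf⟩
    · rcases Sym2.mem_iff.1 hvf with rfl | rfl
      · exact hx ⟨e, he, hve⟩
      · exact hy ⟨e, he, hve⟩
    · exact hM.2 e he f hf hne v ⟨hve, hvf⟩

lemma empty_avoid (G : SimpleGraph X) (F : Set X) : AvoidMatching G F ∅ :=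
  ⟨⟨Set.empty_subset _, fun e he => absurd he (Set.notMem_empty e)⟩,
    fun e he => absurd he (Set.notMem_empty e)⟩

variable {V : Type*} [Fintype V] {G : SimpleGraph V}

lemma forward (hodd : Odd (Fintype.card V)) (hc : G.Connected)
    (heq : Equimatchable (strongProd G (pathGraph 3))) : G = ⊤ := by
  classical
  set n := Fintype.card V with hn_def
  obtain ⟨K0, -, hK0⟩ := exists_avoidMaximal_ge (empty_avoid G ∅)
  set s := K0.ncard with hs_def
  -- all avoid-maximal matchings have size s
  have hsize : ∀ Ws K, (Ws.Pairwise fun a b => ¬ G.Adj a b) → AvoidMaximal G Ws K →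
      K.ncard = s := by
    intro Ws K hWs hK
    exact key_eq heq hWs (Set.pairwise_empty _) hK hK0
  -- matching number bound
  have hnu : ∀ N, IsMatchingSet G N → N.ncard ≤ s := by
    intro N hN
    obtain ⟨M, hM, hle⟩ := avoid_ncard_le (F := ∅) ⟨hN, fun e _ v _ h => h.elim⟩
    calc N.ncard ≤ M.ncard := hle
    _ = s := hsize ∅ M (Set.pairwise_empty _) hM
  -- independent set bound
  have hindep : ∀ Ws : Set V, (Ws.Pairwise fun a b => ¬ G.Adj a b) →
      Ws.ncard + 2 * s ≤ n := by
    intro Ws hWs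
    obtain ⟨K, -, hK⟩ := exists_avoidMaximal_ge (empty_avoid G Ws)
    have hsub : mVerts K ⊆ Wsᶜ := fun v hv => mVerts_disjoint_of_avoid hK.1 v hv
    have h1 : (mVerts K).ncard ≤ Wsᶜ.ncard := Set.ncard_le_ncard hsub (Set.toFinite _)
    have h2 : Ws.ncard + Wsᶜ.ncard = n := by
      rw [Set.ncard_add_ncard_compl, Nat.card_eq_fintype_card]
    have h3 : (mVerts K).ncard = 2 * K.ncard := ncard_mVerts _ hK.1.1
    have h4 : K.ncard = s := hsize Ws K hWs hK
    omega
  set U := (mVerts K0)ᶜ with hU_def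
  have hUmem : ∀ x, x ∈ U ↔ x ∉ mVerts K0 := fun x => Iff.rfl
  have hUcard : U.ncard + 2 * s = n := by
    have h2 : (mVerts K0).ncard + U.ncard = n := by
      rw [Set.ncard_add_ncard_compl, Nat.card_eq_fintype_card]
    have h3 : (mVerts K0).ncard = 2 * K0.ncard := ncard_mVerts _ hK0.1.1
    omega
  have hUindep : U.Pairwise fun a b => ¬ G.Adj a b := by
    intro x hx y hy hne hadj
    exact hK0.2 x y hadj (Set.notMem_empty x) (Set.notMem_empty y) hx hy
  -- suppose G is not complete
  by_contra hGne
  have hab : ∃ a b : V, a ≠ b ∧ ¬ G.Adj a b := by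
    by_contra hcon
    push_neg at hcon
    apply hGne
    ext x y
    simp only [SimpleGraph.top_adj]
    exact ⟨fun h => h.ne, fun h => hcon x y h⟩
  obtain ⟨a, b, habne, habnadj⟩ := hab
  have hpair : ({a, b} : Set V).Pairwise fun a b => ¬ G.Adj a b := by
    intro x hx y hy hne hadj
    rcases hx with rfl | hx
    · rcases hy with rfl | hy
      · exact hne rfl
      · rw [Set.mem_singleton_iff] at hy; subst hy; exact habnadj hadj
    · rw [Set.mem_singleton_iff] at hx; subst hx
      rcases hy with rfl | hy
      · exact habnadj hadj.symm
      · rw [Set.mem_singleton_iff] at hy; subst hy; exact hne rfl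
  have h2n : 2 + 2 * s ≤ n := by
    have := hindep {a, b} hpair
    rwa [Set.ncard_pair habne] at this
  have hU3 : 3 ≤ U.ncard := by
    obtain ⟨m, hm⟩ := hodd
    omega
  -- the augmenting swap
  have haug : ∀ x y u u' : V, s(x,y) ∈ K0 → u ∈ U → u' ∈ U → u ≠ u' →
      G.Adj u x → G.Adj u' y → False := by
    intro x y u u' he hu hu' huu hux hu'y
    have hxy : G.Adj x y := (G.mem_edgeSet).1 (hK0.1.1.1 he)
    have hxK : x ∈ mVerts K0 := ⟨_, he, by simp⟩
    have hyK : y ∈ mVerts K0 := ⟨_, he, by simp⟩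
    set M1 := K0 \ {s(x,y)} with hM1_def
    have hM1 : IsMatchingSet G M1 :=
      matchingSet_subset hK0.1.1 Set.diff_subset
    have hM1v : ∀ w, w ∈ mVerts M1 → w ≠ x ∧ w ≠ y := by
      rintro w ⟨f, ⟨hfK, hfne⟩, hwf⟩
      simp only [Set.mem_singleton_iff] at hfne
      constructor
      · rintro rfl
        exact hfne (eq_of_shared hK0.1.1 hfK he hwf (by simp))
      · rintro rfl
        exact hfne (eq_of_shared hK0.1.1 hfK he hwf (by simp))
    have hM1sub : mVerts M1 ⊆ mVerts K0 := mVerts_mono Set.diff_subset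
    have hxM1 : x ∉ mVerts M1 := fun h => (hM1v x h).1 rfl
    have hyM1 : y ∉ mVerts M1 := fun h => (hM1v y h).2 rfl
    have huM1 : u ∉ mVerts M1 := fun h => hu (hM1sub h)
    have hu'M1 : u' ∉ mVerts M1 := fun h => hu' (hM1sub h)
    set M2 := insert s(u', y) M1 with hM2_def
    have hM2 : IsMatchingSet G M2 := matching_insert hM1 hu'y hu'M1 hyM1
    have huM2 : u ∉ mVerts M2 := by
      rw [hM2_def, mVerts_insert]
      rintro (h | h)
      · rcases Sym2.mem_iff.1 h with rfl | rfl
        · exact huu rfl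
        · exact hu hyK
      · exact huM1 h
    have hxM2 : x ∉ mVerts M2 := by
      rw [hM2_def, mVerts_insert]
      rintro (h | h)
      · rcases Sym2.mem_iff.1 h with rfl | rfl
        · exact hu' hxK
        · exact hxy.ne rfl
      · exact hxM1 h
    set M3 := insert s(u, x) M2 with hM3_def
    have hM3 : IsMatchingSet G M3 := matching_insert hM2 hux huM2 hxM2
    have c1 : M1.ncard + 1 = s := Set.ncard_diff_singleton_add_one he (Set.toFinite _)
    have c2 : M2.ncard = M1.ncard + 1 :=
      Set.ncard_insert_of_notMem (not_mem_of_fst_free hu'M1) (Set.toFinite _)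
    have c3 : M3.ncard = M2.ncard + 1 :=
      Set.ncard_insert_of_notMem (not_mem_of_fst_free huM2) (Set.toFinite _)
    have := hnu M3 hM3
    omega
  -- unique U-neighbour
  have huniq : ∀ x, x ∉ U → ∃! u, u ∈ U ∧ G.Adj u x := by
    intro x hxU
    have hexist : ∃ u, u ∈ U ∧ G.Adj u x := by
      by_contra hno
      push_neg at hno
      have hins : (insert x U).Pairwise fun a b => ¬ G.Adj a b := by
        apply Set.Pairwise.insert hUindep
        intro u hu hne
        exact ⟨fun h => hno u hu h.symm, hno u hu⟩
      have hcard : (insert x U).ncard = U.ncard + 1 :=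
        Set.ncard_insert_of_notMem hxU (Set.toFinite _)
      have := hindep _ hins
      omega
    obtain ⟨u, hu⟩ := hexist
    refine ⟨u, hu, ?_⟩
    intro u' hu'
    by_contra hne
    -- x is matched; use haug
    have hxK : x ∈ mVerts K0 := by
      by_contra h
      exact hxU h
    obtain ⟨y, hxy, hexy⟩ := partner hK0.1.1 hxK
    have hyU : y ∉ U := fun h => h ⟨_, hexy, by simp⟩
    have hyex : ∃ w, w ∈ U ∧ G.Adj w y := by
      by_contra hno
      push_neg at hno
      have hins : (insert y U).Pairwise fun a b => ¬ G.Adj a b := by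
        apply Set.Pairwise.insert hUindep
        intro w hw hne2
        exact ⟨fun h => hno w hw h.symm, hno w hw⟩
      have hcard : (insert y U).ncard = U.ncard + 1 :=
        Set.ncard_insert_of_notMem hyU (Set.toFinite _)
      have := hindep _ hins
      omega
    obtain ⟨w, hwU, hwy⟩ := hyex
    by_cases hwu : w = u
    · exact haug x y u' w hexy hu'.1 hwU (fun h => hne (h.trans hwu)) hu'.2 hwy
    · exact haug x y u w hexy hu.1 hwU (fun h => hwu h.symm) hu.2 hwy
  -- the lobe function
  set φ : V → V := fun x => if hx : x ∉ U then (huniq x hx).choose else x with hφdef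
  have hφspec : ∀ x, ∀ hx : x ∉ U,
      (φ x ∈ U ∧ G.Adj (φ x) x) ∧ ∀ u, (u ∈ U ∧ G.Adj u x) → u = φ x := by
    intro x hx
    rw [hφdef]
    simp only [dif_pos hx]
    exact (huniq x hx).choose_spec
  have hsame : ∀ x y, s(x, y) ∈ K0 → φ x = φ y := by
    intro x y he
    have hxU : x ∉ U := fun h => h ⟨_, he, by simp⟩
    have hyU : y ∉ U := fun h => h ⟨_, he, by simp⟩
    by_contra hne
    exact haug x y (φ x) (φ y) he (hφspec x hxU).1.1 (hφspec y hyU).1.1 hne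
      (hφspec x hxU).1.2 (hφspec y hyU).1.2
  by_cases hcross : ∃ x z, x ∉ U ∧ z ∉ U ∧ G.Adj x z ∧ φ x ≠ φ z
  · -- build an augmenting configuration
    obtain ⟨x0, z0, hx0U, hz0U, hadj0, hφne⟩ := hcross
    have hx0m : x0 ∈ mVerts K0 := by by_contra h; exact hx0U h
    have hz0m : z0 ∈ mVerts K0 := by by_contra h; exact hz0U h
    obtain ⟨p, hx0p, he1⟩ := partner hK0.1.1 hx0m
    obtain ⟨q, hz0q, he2⟩ := partner hK0.1.1 hz0m
    have hpU : p ∉ U := fun h => h ⟨_, he1, by simp⟩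
    have hqU : q ∉ U := fun h => h ⟨_, he2, by simp⟩
    have hpm : p ∈ mVerts K0 := by by_contra h; exact hpU h
    have hqm : q ∈ mVerts K0 := by by_contra h; exact hqU h
    have hu : φ x0 ∈ U ∧ G.Adj (φ x0) x0 := (hφspec x0 hx0U).1
    have hv : φ z0 ∈ U ∧ G.Adj (φ z0) z0 := (hφspec z0 hz0U).1
    have hφp : φ p = φ x0 := (hsame x0 p he1).symm
    have hφq : φ q = φ z0 := (hsame z0 q he2).symm
    have hAup : G.Adj (φ x0) p := by
      have := (hφspec p hpU).1.2; rwa [hφp] at this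
    have hAvq : G.Adj (φ z0) q := by
      have := (hφspec q hqU).1.2; rwa [hφq] at this
    have huU : φ x0 ∈ U := hu.1
    have hvU : φ z0 ∈ U := hv.1
    have hx0z0 : x0 ≠ z0 := fun h => hφne (by rw [h])
    have hx0q : x0 ≠ q := fun h => hφne (by rw [h, hφq])
    have hpz0 : p ≠ z0 := fun h => hφne (by rw [← hφp, h])
    have hpq : p ≠ q := fun h => hφne (by rw [← hφp, h, hφq])
    have hx0p' : x0 ≠ p := hx0p.ne
    have hz0q' : z0 ≠ q := hz0q.ne
    have he12 : s(x0, p) ≠ s(z0, q) := by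
      intro h
      rcases Sym2.eq_iff.1 h with ⟨h1, -⟩ | ⟨h1, -⟩
      · exact hx0z0 h1
      · exact hx0q h1
    set M1 := K0 \ {s(x0, p), s(z0, q)} with hM1d
    have hM1 : IsMatchingSet G M1 := matchingSet_subset hK0.1.1 Set.diff_subset
    have hM1v : ∀ w, w ∈ mVerts M1 → w ≠ x0 ∧ w ≠ p ∧ w ≠ z0 ∧ w ≠ q := by
      rintro w ⟨f, ⟨hfK, hfne⟩, hwf⟩
      simp only [Set.mem_insert_iff, Set.mem_singleton_iff, not_or] at hfne
      refine ⟨?_, ?_, ?_, ?_⟩ <;> rintro rfl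
      · exact hfne.1 (eq_of_shared hK0.1.1 hfK he1 hwf (by simp))
      · exact hfne.1 (eq_of_shared hK0.1.1 hfK he1 hwf (by simp))
      · exact hfne.2 (eq_of_shared hK0.1.1 hfK he2 hwf (by simp))
      · exact hfne.2 (eq_of_shared hK0.1.1 hfK he2 hwf (by simp))
    have hM1sub : mVerts M1 ⊆ mVerts K0 := mVerts_mono Set.diff_subset
    have hx0M1 : x0 ∉ mVerts M1 := fun h => (hM1v _ h).1 rfl
    have hz0M1 : z0 ∉ mVerts M1 := fun h => (hM1v _ h).2.2.1 rfl
    have hpM1 : p ∉ mVerts M1 := fun h => (hM1v _ h).2.1 rfl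
    have hqM1 : q ∉ mVerts M1 := fun h => (hM1v _ h).2.2.2 rfl
    set M2 := insert s(x0, z0) M1 with hM2d
    have hM2 : IsMatchingSet G M2 := matching_insert hM1 hadj0 hx0M1 hz0M1
    have hvM2 : φ z0 ∉ mVerts M2 := by
      rw [hM2d, mVerts_insert]
      rintro (h | h)
      · rcases Sym2.mem_iff.1 h with h | h
        · exact hvU (by rw [h]; exact hx0m)
        · exact hvU (by rw [h]; exact hz0m)
      · exact hvU (hM1sub h)
    have hqM2 : q ∉ mVerts M2 := by
      rw [hM2d, mVerts_insert]
      rintro (h | h)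
      · rcases Sym2.mem_iff.1 h with h | h
        · exact hx0q h.symm
        · exact hz0q' h.symm
      · exact hqM1 h
    set M3 := insert s(φ z0, q) M2 with hM3d
    have hM3 : IsMatchingSet G M3 := matching_insert hM2 hAvq hvM2 hqM2
    have huM3 : φ x0 ∉ mVerts M3 := by
      rw [hM3d, mVerts_insert]
      rintro (h | h)
      · rcases Sym2.mem_iff.1 h with h | h
        · exact hφne h
        · exact huU (by rw [h]; exact hqm)
      · rw [hM2d, mVerts_insert] at h
        rcases h with h | h
        · rcases Sym2.mem_iff.1 h with h | h
          · exact huU (by rw [h]; exact hx0m)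
          · exact huU (by rw [h]; exact hz0m)
        · exact huU (hM1sub h)
    have hpM3 : p ∉ mVerts M3 := by
      rw [hM3d, mVerts_insert]
      rintro (h | h)
      · rcases Sym2.mem_iff.1 h with h | h
        · exact hvU (h ▸ hpm)
        · exact hpq h
      · rw [hM2d, mVerts_insert] at h
        rcases h with h | h
        · rcases Sym2.mem_iff.1 h with h | h
          · exact hx0p' h.symm
          · exact hpz0 h
        · exact hpM1 h
    set M4 := insert s(φ x0, p) M3 with hM4d
    have hM4 : IsMatchingSet G M4 := matching_insert hM3 hAup huM3 hpM3
    -- cardinalities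
    have hstep : (K0 \ {s(x0, p)}) \ {s(z0, q)} = M1 := by
      rw [hM1d, Set.diff_diff, Set.singleton_union]
    have hmem2 : s(z0, q) ∈ K0 \ {s(x0, p)} := ⟨he2, by simp [he12.symm]⟩
    have c0 : (K0 \ {s(x0, p)}).ncard + 1 = s :=
      Set.ncard_diff_singleton_add_one he1 (Set.toFinite _)
    have c1 : M1.ncard + 1 = (K0 \ {s(x0, p)}).ncard := by
      rw [← hstep]
      exact Set.ncard_diff_singleton_add_one hmem2 (Set.toFinite _)
    have c2 : M2.ncard = M1.ncard + 1 :=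
      Set.ncard_insert_of_notMem (not_mem_of_fst_free hx0M1) (Set.toFinite _)
    have c3 : M3.ncard = M2.ncard + 1 :=
      Set.ncard_insert_of_notMem (not_mem_of_fst_free hvM2) (Set.toFinite _)
    have c4 : M4.ncard = M3.ncard + 1 :=
      Set.ncard_insert_of_notMem (not_mem_of_fst_free huM3) (Set.toFinite _)
    have := hnu M4 hM4
    omega
  · -- no cross edge: contradicts connectivity
    push_neg at hcross
    have h2U : 1 < U.ncard := by omega
    obtain ⟨u, hu, v, hv, huv⟩ := (Set.one_lt_ncard (Set.toFinite _)).1 h2U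
    set L : Set V := {p | p = u ∨ (p ∉ U ∧ φ p = u)} with hLdef
    have hclose : ∀ p q, G.Adj p q → p ∈ L → q ∈ L := by
      intro p q hadj hp
      rcases hp with rfl | ⟨hpU, hpφ⟩
      · have hqU : q ∉ U := by
          intro hq
          exact hUindep hu hq hadj.ne hadj
        exact Or.inr ⟨hqU, ((hφspec q hqU).2 p ⟨hu, hadj⟩).symm⟩
      · by_cases hqU : q ∈ U
        · left
          have := (hφspec p hpU).2 q ⟨hqU, hadj.symm⟩
          rw [this, hpφ]
        · exact Or.inr ⟨hqU, (hcross q p hqU hpU hadj.symm).trans hpφ⟩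
    have hwalk : ∀ p q : V, G.Walk p q → p ∈ L → q ∈ L := by
      intro p q w
      induction w with
      | nil => exact id
      | cons h _ ih => exact fun hp => ih (hclose _ _ h hp)
    obtain ⟨w⟩ := hc.preconnected u v
    rcases hwalk u v w (Or.inl rfl) with h | ⟨hvU, -⟩
    · exact huv h.symm
    · exact hvU hv

end Forward
end Stmt12Aux
namespace Stmt12Aux
section Backward

variable {V : Type*} [Fintype V]

lemma backward (hodd : Odd (Fintype.card V)) :
    Equimatchable (strongProd (⊤ : SimpleGraph V) (pathGraph 3)) := by
  classical
  intro M M' hM hM'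
  set n := Fintype.card V with hn_def
  have hcardprod : Nat.card (V × Fin 3) = 3 * n := by
    rw [Nat.card_eq_fintype_card, Fintype.card_prod, Fintype.card_fin]
    ring
  have hM'1 : (mVerts M').ncard = 2 * M'.ncard := ncard_mVerts _ hM'
  have hle : (mVerts M').ncard ≤ 3 * n := by
    have := Set.ncard_le_ncard (Set.subset_univ (mVerts M')) (Set.toFinite _)
    rwa [Set.ncard_univ, hcardprod] at this
  set E := (mVerts M)ᶜ with hEdef
  have hcomp : (mVerts M).ncard + E.ncard = 3 * n := by
    rw [hEdef, Set.ncard_add_ncard_compl, hcardprod]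
  have hMcount : (mVerts M).ncard = 2 * M.ncard := ncard_mVerts _ hM.1
  have hEind : ∀ p ∈ E, ∀ q ∈ E, p ≠ q →
      ¬ (strongProd (⊤ : SimpleGraph V) (pathGraph 3)).Adj p q := by
    intro p hp q hq hne hadj
    have hins := matching_insert hM.1 hadj hp hq
    have heqM := hM.2 _ (Set.subset_insert _ _) hins
    exact hp ⟨_, heqM ▸ Set.mem_insert _ _, by simp⟩
  have hcoord : ∀ p ∈ E, ∀ q ∈ E, p ≠ q →
      ((p : V × Fin 3).2.val = 0 ∧ (q : V × Fin 3).2.val = 2) ∨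
        (p.2.val = 2 ∧ q.2.val = 0) := by
    intro p hp q hq hne
    have hnadj := hEind p hp q hq hne
    rw [strongProd_adj] at hnadj
    have hB : p.1 = q.1 ∨ (⊤ : SimpleGraph V).Adj p.1 q.1 := by
      by_cases h : p.1 = q.1
      · exact Or.inl h
      · exact Or.inr h
    have hC : ¬ (p.2 = q.2 ∨ (pathGraph 3).Adj p.2 q.2) := by
      intro hC
      exact hnadj ⟨hne, hB, hC⟩
    push_neg at hC
    obtain ⟨hC1, hC2⟩ := hC
    rw [pathGraph_adj] at hC2
    push_neg at hC2
    have hv1 : p.2.val ≠ q.2.val := fun h => hC1 (Fin.ext h)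
    have hb1 : p.2.val < 3 := p.2.is_lt
    have hb2 : q.2.val < 3 := q.2.is_lt
    omega
  have hE2 : E.ncard ≤ 2 := by
    by_contra hgt
    push_neg at hgt
    obtain ⟨p, hp, q, hq, r, hr, hpq, hpr, hqr⟩ :=
      (Set.two_lt_ncard (Set.toFinite _)).1 hgt
    rcases hcoord p hp q hq hpq with ⟨h1, h2⟩ | ⟨h1, h2⟩ <;>
      rcases hcoord p hp r hr hpr with ⟨h3, h4⟩ | ⟨h3, h4⟩ <;>
      rcases hcoord q hq r hr hqr with ⟨h5, h6⟩ | ⟨h5, h6⟩ <;> omega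
  obtain ⟨m, hm⟩ := hodd
  omega

end Backward
end Stmt12Aux
theorem stmt12 [Fintype V] (G : SimpleGraph V)
    (hn : 2 ≤ Fintype.card V) (hodd : Odd (Fintype.card V))
    (hc : G.Connected) :
    Equimatchable (strongProd G (pathGraph 3)) ↔ G = ⊤ := by
  constructor
  · intro heq
    exact Stmt12Aux.forward hodd hc heq
  · rintro rfl
    exact Stmt12Aux.backward hodd
end

section
/- Let G be a graph of odd order. If G contains an independent set S of size three such that G − v has a perfect matching for every v ∈ S, then G ⊠ K_3 is not equimatchable. -/
open SimpleGraph

variable {V : Type*} {W : Type*}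

section Helpers

lemma mVerts_union (A B : Set (Sym2 V)) : mVerts (A ∪ B) = mVerts A ∪ mVerts B := by
  ext v
  simp only [mVerts, Set.mem_setOf_eq, Set.mem_union]
  constructor
  · rintro ⟨e, (he | he), hv⟩
    · exact Or.inl ⟨e, he, hv⟩
    · exact Or.inr ⟨e, he, hv⟩
  · rintro (⟨e, he, hv⟩ | ⟨e, he, hv⟩)
    · exact ⟨e, Or.inl he, hv⟩
    · exact ⟨e, Or.inr he, hv⟩

lemma mVerts_image_map {α β : Type*} (f : α → β) (N : Set (Sym2 α)) :
    mVerts (Sym2.map f '' N) = f '' mVerts N := by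
  ext v
  simp only [mVerts, Set.mem_setOf_eq, Set.mem_image]
  constructor
  · rintro ⟨e, ⟨e', he', rfl⟩, hv⟩
    obtain ⟨w, hw, rfl⟩ := Sym2.mem_map.mp hv
    exact ⟨w, ⟨e', he', hw⟩, rfl⟩
  · rintro ⟨w, ⟨e', he', hw⟩, rfl⟩
    exact ⟨Sym2.map f e', ⟨e', he', rfl⟩, Sym2.mem_map.mpr ⟨w, hw, rfl⟩⟩

lemma union_matching (G : SimpleGraph V) {A B : Set (Sym2 V)}
    (hA : IsMatchingSet G A) (hB : IsMatchingSet G B)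
    (hdisj : Disjoint (mVerts A) (mVerts B)) : IsMatchingSet G (A ∪ B) := by
  refine ⟨Set.union_subset hA.1 hB.1, ?_⟩
  rintro e (heA | heB) f (hfA | hfB) hef v ⟨hve, hvf⟩
  · exact hA.2 e heA f hfA hef v ⟨hve, hvf⟩
  · exact Set.disjoint_left.mp hdisj ⟨e, heA, hve⟩ ⟨f, hfB, hvf⟩
  · exact Set.disjoint_left.mp hdisj ⟨f, hfA, hvf⟩ ⟨e, heB, hve⟩
  · exact hB.2 e heB f hfB hef v ⟨hve, hvf⟩

/-- Double counting: a matching covers twice as many vertices as it has edges. -/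
lemma mVerts_ncard [Fintype V] (M : Set (Sym2 V))
    (hM : ∀ e ∈ M, ¬ e.IsDiag)
    (hd : ∀ e ∈ M, ∀ f ∈ M, e ≠ f → ∀ v : V, ¬ (v ∈ e ∧ v ∈ f)) :
    (mVerts M).ncard = 2 * M.ncard := by
  classical
  have key : ∀ (N : Set (Sym2 V)), N.Finite →
      (∀ e ∈ N, ¬ e.IsDiag) →
      (∀ e ∈ N, ∀ f ∈ N, e ≠ f → ∀ v : V, ¬ (v ∈ e ∧ v ∈ f)) →
      (mVerts N).ncard = 2 * N.ncard := by
    intro N hfin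
    refine Set.Finite.induction_on N hfin ?_ ?_
    · intro _ _
      have : mVerts (∅ : Set (Sym2 V)) = ∅ := by
        ext v; simp [mVerts]
      simp [this]
    · intro e s hes hsfin ih hM' hd'
      have hdiag : ¬ e.IsDiag := hM' e (Set.mem_insert _ _)
      have hs1 : ∀ f ∈ s, ¬ f.IsDiag := fun f hf => hM' f (Set.mem_insert_of_mem _ hf)
      have hs2 : ∀ e' ∈ s, ∀ f ∈ s, e' ≠ f → ∀ v : V, ¬ (v ∈ e' ∧ v ∈ f) :=
        fun e' he' f hf => hd' e' (Set.mem_insert_of_mem _ he') f (Set.mem_insert_of_mem _ hf)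
      have hmv : mVerts (insert e s) = {v : V | v ∈ e} ∪ mVerts s := by
        ext v
        simp only [mVerts, Set.mem_setOf_eq, Set.mem_union, Set.mem_insert_iff]
        constructor
        · rintro ⟨f, (rfl | hf), hv⟩
          · exact Or.inl hv
          · exact Or.inr ⟨f, hf, hv⟩
        · rintro (hv | ⟨f, hf, hv⟩)
          · exact ⟨e, Or.inl rfl, hv⟩
          · exact ⟨f, Or.inr hf, hv⟩
      have hdisj : Disjoint {v : V | v ∈ e} (mVerts s) := by
        rw [Set.disjoint_left]
        rintro v hv ⟨f, hf, hvf⟩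
        exact hd' e (Set.mem_insert _ _) f (Set.mem_insert_of_mem _ hf)
          (fun h => hes (h ▸ hf)) v ⟨hv, hvf⟩
      have hecard : ({v : V | v ∈ e}).ncard = 2 := by
        induction e using Sym2.ind with
        | _ x y =>
          have hxy : x ≠ y := by
            intro h; exact hdiag (Sym2.mk_isDiag_iff.mpr h)
          have : {v : V | v ∈ s(x, y)} = {x, y} := by
            ext v; simp [Sym2.mem_iff]
          rw [this]; exact Set.ncard_pair hxy
      rw [hmv, Set.ncard_union_eq hdisj (Set.toFinite _) (Set.toFinite _), hecard,
        ih hs1 hs2, Set.ncard_insert_of_notMem hes hsfin]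
      ring
  exact key M (Set.toFinite M) hM hd

/-- Lifting a perfect matching of `G - v` to a matching of `G` covering `{v}ᶜ`. -/
lemma lift_pm (G : SimpleGraph V) (v : V) {M₀ : Set (Sym2 ↥({v}ᶜ : Set V))}
    (h : IsPerfectMatchingSet (delVerts G {v}) M₀) :
    ∃ N : Set (Sym2 V), IsMatchingSet G N ∧ mVerts N = {v}ᶜ := by
  refine ⟨Sym2.map Subtype.val '' M₀, ⟨?_, ?_⟩, ?_⟩
  · rintro e ⟨e', he', rfl⟩
    have := h.1.1 he'
    induction e' using Sym2.ind with
    | _ x y =>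
      rw [SimpleGraph.mem_edgeSet] at this
      exact (SimpleGraph.mem_edgeSet _).mpr this
  · rintro e ⟨e', he', rfl⟩ f ⟨f', hf', rfl⟩ hef w ⟨hwe, hwf⟩
    have hef' : e' ≠ f' := fun h' => hef (h' ▸ rfl)
    obtain ⟨x, hx, hxw⟩ := Sym2.mem_map.mp hwe
    obtain ⟨y, hy, hyw⟩ := Sym2.mem_map.mp hwf
    have hxy : x = y := Subtype.val_injective (hxw.trans hyw.symm)
    exact h.1.2 e' he' f' hf' hef' x ⟨hx, hxy ▸ hy⟩
  · ext w
    simp only [mVerts, Set.mem_setOf_eq, Set.mem_compl_iff, Set.mem_singleton_iff]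
    constructor
    · rintro ⟨e, ⟨e', he', rfl⟩, hw⟩
      obtain ⟨x, _, rfl⟩ := Sym2.mem_map.mp hw
      exact x.2
    · intro hw
      obtain ⟨e', he', hx⟩ := h.2 ⟨w, hw⟩
      exact ⟨Sym2.map Subtype.val e', ⟨e', he', rfl⟩, Sym2.mem_map.mpr ⟨⟨w, hw⟩, hx, rfl⟩⟩

/-- A layer copy of a matching inside a strong product. -/
lemma layer_matching (G : SimpleGraph V) (H : SimpleGraph W) (i : W)
    {N : Set (Sym2 V)} (hN : IsMatchingSet G N) :
    IsMatchingSet (strongProd G H) (Sym2.map (fun v => (v, i)) '' N) := by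
  constructor
  · rintro e ⟨e', he', rfl⟩
    have := hN.1 he'
    induction e' using Sym2.ind with
    | _ x y =>
      rw [SimpleGraph.mem_edgeSet] at this
      refine (SimpleGraph.mem_edgeSet _).mpr ⟨?_, Or.inr this, Or.inl rfl⟩
      intro hcon
      exact this.ne (congrArg Prod.fst hcon)
  · rintro e ⟨e', he', rfl⟩ f ⟨f', hf', rfl⟩ hef w ⟨hwe, hwf⟩
    have hef' : e' ≠ f' := fun h' => hef (h' ▸ rfl)
    obtain ⟨x, hx, hxw⟩ := Sym2.mem_map.mp hwe
    obtain ⟨y, hy, hyw⟩ := Sym2.mem_map.mp hwf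
    have hxy : x = y := congrArg Prod.fst (hxw.trans hyw.symm)
    exact hN.2 e' he' f' hf' hef' x ⟨hx, hxy ▸ hy⟩

end Helpers
theorem stmt13 [Fintype V] (G : SimpleGraph V) (hodd : Odd (Fintype.card V))
    (S : Set V) (hScard : S.ncard = 3)
    (hSindep : S.Pairwise fun u v => ¬ G.Adj u v)
    (hpm : ∀ v ∈ S, ∃ M, IsPerfectMatchingSet (delVerts G {v}) M) :
    ¬ Equimatchable (strongProd G (⊤ : SimpleGraph (Fin 3))) := by
  classical
  obtain ⟨a, b, c, hab, hac, hbc, rfl⟩ := Set.ncard_eq_three.mp hScard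
  have ha : a ∈ ({a, b, c} : Set V) := by simp
  have hb : b ∈ ({a, b, c} : Set V) := by simp
  have hc : c ∈ ({a, b, c} : Set V) := by simp
  have hGab : ¬ G.Adj a b := hSindep ha hb hab
  have hGac : ¬ G.Adj a c := hSindep ha hc hac
  have hGbc : ¬ G.Adj b c := hSindep hb hc hbc
  have hGba : ¬ G.Adj b a := fun h => hGab h.symm
  have hGca : ¬ G.Adj c a := fun h => hGac h.symm
  have hGcb : ¬ G.Adj c b := fun h => hGbc h.symm
  obtain ⟨Ma₀, hMa₀⟩ := hpm a ha
  obtain ⟨Mb₀, hMb₀⟩ := hpm b hb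
  obtain ⟨Mc₀, hMc₀⟩ := hpm c hc
  obtain ⟨Na, hNam, hNav⟩ := lift_pm G a hMa₀
  obtain ⟨Nb, hNbm, hNbv⟩ := lift_pm G b hMb₀
  obtain ⟨Nc, hNcm, hNcv⟩ := lift_pm G c hMc₀
  set H := strongProd G (⊤ : SimpleGraph (Fin 3)) with hH
  set L0 : Set (Sym2 (V × Fin 3)) := Sym2.map (fun v => (v, (0 : Fin 3))) '' Na with hL0
  set L1 : Set (Sym2 (V × Fin 3)) := Sym2.map (fun v => (v, (1 : Fin 3))) '' Nb with hL1
  set L2 : Set (Sym2 (V × Fin 3)) := Sym2.map (fun v => (v, (2 : Fin 3))) '' Nc with hL2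
  set Cols : Set (Sym2 (V × Fin 3)) :=
    Set.range (fun v : V => s((v, (1 : Fin 3)), (v, (2 : Fin 3)))) with hCols
  -- vertex sets of the pieces
  have hL0v : mVerts L0 = (fun v => (v, (0 : Fin 3))) '' ({a}ᶜ) := by
    rw [hL0, mVerts_image_map, hNav]
  have hL1v : mVerts L1 = (fun v => (v, (1 : Fin 3))) '' ({b}ᶜ) := by
    rw [hL1, mVerts_image_map, hNbv]
  have hL2v : mVerts L2 = (fun v => (v, (2 : Fin 3))) '' ({c}ᶜ) := by
    rw [hL2, mVerts_image_map, hNcv]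
  have hColsV : mVerts Cols = {p : V × Fin 3 | p.2 = 1 ∨ p.2 = 2} := by
    ext ⟨v, i⟩
    simp only [mVerts, Set.mem_setOf_eq]
    constructor
    · rintro ⟨e, ⟨w, rfl⟩, hv⟩
      rw [Sym2.mem_iff] at hv
      rcases hv with h | h
      · exact Or.inl (congrArg Prod.snd h)
      · exact Or.inr (congrArg Prod.snd h)
    · rintro (rfl | rfl)
      · exact ⟨s((v, (1 : Fin 3)), (v, (2 : Fin 3))), ⟨v, rfl⟩, Sym2.mem_iff.mpr (Or.inl rfl)⟩
      · exact ⟨s((v, (1 : Fin 3)), (v, (2 : Fin 3))), ⟨v, rfl⟩, Sym2.mem_iff.mpr (Or.inr rfl)⟩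
  -- the pieces are matchings
  have hL0m : IsMatchingSet H L0 := layer_matching G _ _ hNam
  have hL1m : IsMatchingSet H L1 := layer_matching G _ _ hNbm
  have hL2m : IsMatchingSet H L2 := layer_matching G _ _ hNcm
  have hColsm : IsMatchingSet H Cols := by
    constructor
    · rintro e ⟨v, rfl⟩
      refine (SimpleGraph.mem_edgeSet _).mpr ⟨?_, Or.inl rfl, Or.inr ?_⟩
      · intro h
        exact absurd (show (1 : Fin 3) = 2 from congrArg Prod.snd h) (by decide)
      · show (1 : Fin 3) ≠ 2
        decide
    · rintro e ⟨v, rfl⟩ f ⟨w, rfl⟩ hef z ⟨hze, hzf⟩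
      have hvw : v ≠ w := fun h => hef (by rw [h])
      rw [Sym2.mem_iff] at hze hzf
      have h1 : z.1 = v := by rcases hze with rfl | rfl <;> rfl
      have h2 : z.1 = w := by rcases hzf with rfl | rfl <;> rfl
      exact hvw (h1.symm.trans h2)
  set M : Set (Sym2 (V × Fin 3)) := L0 ∪ (L1 ∪ L2) with hM
  set M' : Set (Sym2 (V × Fin 3)) := L0 ∪ Cols with hM'
  have hL0snd : ∀ p ∈ mVerts L0, p.2 = 0 := by
    rw [hL0v]; rintro p ⟨u, _, rfl⟩; rfl
  have hL1snd : ∀ p ∈ mVerts L1, p.2 = 1 := by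
    rw [hL1v]; rintro p ⟨u, _, rfl⟩; rfl
  have hL2snd : ∀ p ∈ mVerts L2, p.2 = 2 := by
    rw [hL2v]; rintro p ⟨u, _, rfl⟩; rfl
  have hMm : IsMatchingSet H M := by
    refine union_matching H hL0m (union_matching H hL1m hL2m ?_) ?_
    · rw [Set.disjoint_left]
      intro p hp1 hp2
      have := (hL1snd p hp1).symm.trans (hL2snd p hp2)
      exact absurd this (by decide)
    · rw [Set.disjoint_left, mVerts_union]
      rintro p hp0 (hp1 | hp2)
      · exact absurd ((hL0snd p hp0).symm.trans (hL1snd p hp1)) (by decide)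
      · exact absurd ((hL0snd p hp0).symm.trans (hL2snd p hp2)) (by decide)
  have hM'm : IsMatchingSet H M' := by
    refine union_matching H hL0m hColsm ?_
    rw [Set.disjoint_left, hColsV]
    intro p hp0 hp
    rcases hp with h | h <;>
      exact absurd ((hL0snd p hp0).symm.trans h) (by decide)
  set T : Set (V × Fin 3) := {(a, 0), (b, 1), (c, 2)} with hT
  have hMv : mVerts M = Tᶜ := by
    rw [hM, mVerts_union, mVerts_union, hL0v, hL1v, hL2v, hT]
    ext ⟨v, i⟩
    simp only [Set.mem_union, Set.mem_image, Set.mem_compl_iff, Set.mem_insert_iff,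
      Set.mem_singleton_iff, Prod.mk.injEq, not_or, not_and]
    fin_cases i <;> simp
  have hM'v : mVerts M' = ({((a : V), (0 : Fin 3))} : Set (V × Fin 3))ᶜ := by
    rw [hM', mVerts_union, hL0v, hColsV]
    ext ⟨v, i⟩
    simp only [Set.mem_union, Set.mem_image, Set.mem_compl_iff, Set.mem_setOf_eq,
      Set.mem_singleton_iff, Prod.mk.injEq, not_and]
    fin_cases i <;> simp
  -- maximality of M
  have hMmaxl : IsMaxlMatching H M := by
    refine ⟨hMm, ?_⟩
    intro M'' hsub hM''
    refine Set.Subset.antisymm ?_ hsub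
    intro e heM''
    by_contra heM
    have hadj : e ∈ H.edgeSet := hM''.1 heM''
    have claim : ∀ z, z ∈ e → z ∈ T := by
      intro z hz
      by_contra hzT
      have : z ∈ mVerts M := by rw [hMv]; exact hzT
      obtain ⟨f, hfM, hzf⟩ := this
      exact hM''.2 e heM'' f (hsub hfM) (fun h => heM (h ▸ hfM)) z ⟨hz, hzf⟩
    revert hadj
    induction e using Sym2.ind with
    | _ x y =>
      intro hadj
      rw [SimpleGraph.mem_edgeSet] at hadj
      have hx : x ∈ T := claim x (Sym2.mem_iff.mpr (Or.inl rfl))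
      have hy : y ∈ T := claim y (Sym2.mem_iff.mpr (Or.inr rfl))
      have hadj2 : x ≠ y ∧ (x.1 = y.1 ∨ G.Adj x.1 y.1) ∧
          (x.2 = y.2 ∨ (⊤ : SimpleGraph (Fin 3)).Adj x.2 y.2) := hadj
      obtain ⟨hne, hfst, _⟩ := hadj2
      rw [hT] at hx hy
      simp only [Set.mem_insert_iff, Set.mem_singleton_iff] at hx hy
      rcases hx with rfl | rfl | rfl <;> rcases hy with rfl | rfl | rfl <;>
        simp_all
  -- cardinalities
  have hdiagM : ∀ e ∈ M, ¬ e.IsDiag := fun e he =>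
    (SimpleGraph.not_isDiag_of_mem_edgeSet H (hMm.1 he))
  have hdiagM' : ∀ e ∈ M', ¬ e.IsDiag := fun e he =>
    (SimpleGraph.not_isDiag_of_mem_edgeSet H (hM'm.1 he))
  have hcM : (mVerts M).ncard = 2 * M.ncard := mVerts_ncard M hdiagM hMm.2
  have hcM' : (mVerts M').ncard = 2 * M'.ncard := mVerts_ncard M' hdiagM' hM'm.2
  have hTcard : T.ncard = 3 := by
    rw [hT]
    refine Set.ncard_eq_three.mpr ⟨(a, 0), (b, 1), (c, 2), ?_, ?_, ?_, rfl⟩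
    · exact fun h => absurd (show (0 : Fin 3) = 1 from congrArg Prod.snd h) (by decide)
    · exact fun h => absurd (show (0 : Fin 3) = 2 from congrArg Prod.snd h) (by decide)
    · exact fun h => absurd (show (1 : Fin 3) = 2 from congrArg Prod.snd h) (by decide)
  have h1 : T.ncard + Tᶜ.ncard = Nat.card (V × Fin 3) :=
    Set.ncard_add_ncard_compl T
  have h2 : ({((a : V), (0 : Fin 3))} : Set (V × Fin 3)).ncard +
      ({((a : V), (0 : Fin 3))} : Set (V × Fin 3))ᶜ.ncard = Nat.card (V × Fin 3) :=
    Set.ncard_add_ncard_compl _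
  rw [Set.ncard_singleton] at h2
  rw [hTcard] at h1
  rw [hMv] at hcM
  rw [hM'v] at hcM'
  intro heq
  have hle := heq M M' hMmaxl hM'm
  omega
end
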